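/- arXiv:1501.00327 — 5 statements merged into one kernel-verified Lean document; each statement's English description precedes it below -/
import Mathlib

section
/- The matroid M_4, obtained from the cycle matroid of the wheel W_4 by adding an element γ whose fundamental circuit with respect to the spoke basis B is B ∪ {γ}, is isomorphic to the dual of the cycle matroid of K_{3,3}. -/
open Set Matroid
open scoped Classical

/-- `M` is the binary matroid on ground set `E` represented by the vectors `v`. -/
def IsBinRepOn {α W : Type*} [AddCommGroup W] [Module (ZMod 2) W]
    (M : Matroid α) (E : Set α) (v : α → W) : Prop :=
  M.E = E ∧ ∀ I ⊆ E, (M.Indep I ↔ LinearIndependent (ZMod 2) (fun x : I => v x))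

/-- Isomorphism of matroids: a bijection of ground sets preserving independence. -/
def MatroidIso {α β : Type*} (M : Matroid α) (N : Matroid β) : Prop :=
  ∃ e : M.E ≃ N.E, ∀ I : Set M.E,
    (M.Indep (Subtype.val '' I) ↔ N.Indep (Subtype.val '' (e '' I)))

/-- The incidence vector of an edge, over GF(2). -/
noncomputable def incVec {V : Type*} (e : Sym2 V) : V → ZMod 2 :=
  fun v => if v ∈ e then 1 else 0

/-- `M` is the cycle matroid of the graph `G`, i.e. the binary matroid on the edge set of `G`
represented by the GF(2) incidence vectors of the edges. -/
def IsCycleMatroidOf {V : Type*} (M : Matroid (Sym2 V)) (G : SimpleGraph V) : Prop :=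
  IsBinRepOn M G.edgeSet incVec

/-- Deletion of a set of elements from a matroid. -/
def mDel {α : Type*} (M : Matroid α) (D : Set α) : Matroid α := M ↾ (M.E \ D)

/-- Contraction of a set of elements in a matroid. -/
def mCon {α : Type*} (M : Matroid α) (C : Set α) : Matroid α := (mDel M✶ C)✶

/-- A circuit of a matroid: a minimal dependent set. -/
def mCircuit {α : Type*} (M : Matroid α) (C : Set α) : Prop :=
  C ⊆ M.E ∧ ¬ M.Indep C ∧ ∀ x ∈ C, M.Indep (C \ {x})

/-- A cocircuit of a matroid: a circuit of the dual. -/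
def mCocircuit {α : Type*} (M : Matroid α) (C : Set α) : Prop := mCircuit M✶ C

/-- The rank of a set in a matroid: the supremum of cardinalities of independent subsets. -/
noncomputable def mRk {α : Type*} (M : Matroid α) (X : Set α) : ℕ :=
  sSup (Set.ncard '' {I | I ⊆ X ∧ M.Indep I})

/-- A `k`-separation of a matroid. -/
def mKSep {α : Type*} (M : Matroid α) (k : ℕ) (X Y : Set α) : Prop :=
  Disjoint X Y ∧ X ∪ Y = M.E ∧ k ≤ X.ncard ∧ k ≤ Y.ncard ∧
    mRk M X + mRk M Y + 1 ≤ mRk M M.E + k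

/-- A matroid is `3`-connected if it has no 1- or 2-separations. -/
def mThreeConnected {α : Type*} (M : Matroid α) : Prop :=
  (∀ X Y, ¬ mKSep M 1 X Y) ∧ (∀ X Y, ¬ mKSep M 2 X Y)

/-- A matroid is internally 4-connected if it is 3-connected and
every 3-separation has a side of size exactly 3. -/
def mInternally4 {α : Type*} (M : Matroid α) : Prop :=
  mThreeConnected M ∧ ∀ X Y, mKSep M 3 X Y → min X.ncard Y.ncard = 3

/-- A matroid is binary if it is representable over GF(2). -/
def mBinary {α : Type*} (M : Matroid α) : Prop :=
  ∃ (n : ℕ) (v : α → (Fin n → ZMod 2)), IsBinRepOn M M.E v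

/-- `M` is the uniform matroid of rank `r` on all of `α`. -/
def mUniformOf {α : Type*} (M : Matroid α) (r : ℕ) : Prop :=
  M.E = univ ∧ ∀ I : Set α, (M.Indep I ↔ I.ncard ≤ r)

/-- The points of the binary projective space of rank 4, `PG(3,2)`. -/
abbrev PGpt (n : ℕ) := {v : Fin n → ZMod 2 // v ≠ 0}

/-- The quartic Möbius ladder on `2n+1` vertices. -/
def qml (n : ℕ) : SimpleGraph (ZMod (2 * n + 1)) :=
  SimpleGraph.circulantGraph {1, (n : ZMod (2 * n + 1))}

/-- The cubic Möbius ladder on `2n` vertices. -/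
def cml (n : ℕ) : SimpleGraph (ZMod (2 * n)) :=
  SimpleGraph.circulantGraph {1, (n : ZMod (2 * n))}
/-- The wheel graph `W_n`, with hub `none` and rim vertices `some i` for `i : ZMod n`. -/
def wheelGraph (n : ℕ) : SimpleGraph (Option (ZMod n)) :=
  SimpleGraph.fromRel (fun a b => a = none ∨ ∃ i, a = some i ∧ b = some (i + 1))

/-- The ground set of `M_n`: the edges of the wheel `W_n` together with the new element γ. -/
def wheelPlusGround (n : ℕ) : Set (Sym2 (Option (ZMod n)) ⊕ Unit) :=
  (Sum.inl '' (wheelGraph n).edgeSet) ∪ {Sum.inr ()}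

/-- The binary representation of `M_n`: wheel edges are represented by their GF(2) incidence
vectors, and γ is represented by the sum of the spoke vectors, so that the fundamental circuit
of γ with respect to the spoke basis `B` is `B ∪ {γ}`. -/
noncomputable def wheelPlusVec (n : ℕ) [NeZero n] :
    Sym2 (Option (ZMod n)) ⊕ Unit → (Option (ZMod n) → ZMod 2) :=
  Sum.elim incVec (fun _ => ∑ i : ZMod n, incVec s((none : Option (ZMod n)), some i))


section Auxiliary

def Mtab : Fin 9 → Fin 5 → ZMod 2 := ![![1,1,0,0,0], ![1,0,1,0,0], ![1,0,0,1,0], ![1,0,0,0,1], ![0,1,1,0,0], ![0,0,1,1,0], ![0,0,0,1,1], ![0,1,0,0,1], ![0,1,1,1,1]]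
def Ntab : Fin 9 → Fin 6 → ZMod 2 := ![![1,0,0,1,0,0], ![1,0,0,0,1,0], ![0,1,0,0,1,0], ![0,1,0,1,0,0], ![1,0,0,0,0,1], ![0,0,1,0,1,0], ![0,1,0,0,0,1], ![0,0,1,1,0,0], ![0,0,1,0,0,1]]

def ov : Option (ZMod 4) → Fin 5
  | none => 0
  | some k => ⟨k.val + 1, by have := ZMod.val_lt k; omega⟩

def colM : Fin 9 → Option (ZMod 4) → ZMod 2 := fun i x => Mtab i (ov x)

def sne : Fin 3 ⊕ Fin 3 → Fin 6
  | .inl i => ⟨i.val, by have := i.isLt; omega⟩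
  | .inr j => ⟨j.val + 3, by have := j.isLt; omega⟩

def colN : Fin 9 → Fin 3 ⊕ Fin 3 → ZMod 2 := fun i x => Ntab i (sne x)

def mElem : Fin 9 → Sym2 (Option (ZMod 4)) ⊕ Unit :=
  ![Sum.inl s((none : Option (ZMod 4)), some 0), Sum.inl s((none : Option (ZMod 4)), some 1), Sum.inl s((none : Option (ZMod 4)), some 2), Sum.inl s((none : Option (ZMod 4)), some 3), Sum.inl s((some 0 : Option (ZMod 4)), some 1), Sum.inl s((some 1 : Option (ZMod 4)), some 2), Sum.inl s((some 2 : Option (ZMod 4)), some 3), Sum.inl s((some 3 : Option (ZMod 4)), some 0), Sum.inr ()]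
def nElem : Fin 9 → Sym2 (Fin 3 ⊕ Fin 3) :=
  ![s(Sum.inl (0 : Fin 3), Sum.inr (0 : Fin 3)), s(Sum.inl (0 : Fin 3), Sum.inr (1 : Fin 3)), s(Sum.inl (1 : Fin 3), Sum.inr (1 : Fin 3)), s(Sum.inl (1 : Fin 3), Sum.inr (0 : Fin 3)), s(Sum.inl (0 : Fin 3), Sum.inr (2 : Fin 3)), s(Sum.inl (2 : Fin 3), Sum.inr (1 : Fin 3)), s(Sum.inl (1 : Fin 3), Sum.inr (2 : Fin 3)), s(Sum.inl (2 : Fin 3), Sum.inr (0 : Fin 3)), s(Sum.inl (2 : Fin 3), Sum.inr (2 : Fin 3))]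

/-- abstract independence predicate on index sets -/
def IndP {κ : Type} [Fintype κ] [DecidableEq κ] (v : Fin 9 → κ → ZMod 2) (s : Finset (Fin 9)) : Prop :=
  ∀ t ⊆ s, t.Nonempty → ∑ i ∈ t, v i ≠ 0

instance {κ : Type} [Fintype κ] [DecidableEq κ] (v : Fin 9 → κ → ZMod 2) (s : Finset (Fin 9)) : Decidable (IndP v s) := by
  unfold IndP; infer_instance

def maskOf (s : Finset (Fin 9)) : ℕ := ∑ i ∈ s, 2 ^ i.val
def finsetOf (n : ℕ) : Finset (Fin 9) := Finset.univ.filter (fun i => n.testBit i.val)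

def Wlist : List ℕ := [55, 348, 348, 348, 203, 362, 185, 440, 55, 406, 421, 244, 242, 242, 369, 496, 203, 362, 421, 0, 203, 362, 233, 0, 421, 230, 421, 0, 451, 482, 481, 0, 203, 348, 348, 348, 203, 218, 0, 0, 406, 406, 213, 468, 451, 466, 0, 0, 203, 206, 397, 0, 203, 0, 0, 0, 327, 454, 453, 0, 451, 0, 0, 0, 55, 406, 421, 440, 185, 426, 185, 440, 55, 406, 421, 436, 0, 0, 0, 0, 421, 426, 421, 0, 426, 426, 425, 0, 421, 422, 421, 0, 0, 0, 0, 0, 406, 406, 397, 412, 283, 410, 0, 0, 406, 406, 0, 0, 0, 0, 0, 0, 397, 398, 397, 0, 395, 0, 0, 0, 391, 0, 0, 0, 0, 0, 0, 0, 55, 348, 348, 348, 362, 362, 369, 376, 55, 0, 369, 0, 369, 0, 369, 0, 362, 362, 109, 0, 362, 362, 361, 0, 327, 0, 0, 0, 355, 0, 0, 0, 348, 348, 348, 348, 283, 346, 0, 0, 327, 0, 341, 0, 339, 0, 0, 0, 327, 334, 333, 0, 331, 0, 0, 0, 327, 0, 0, 0, 0, 0, 0, 0, 55, 62, 301, 316,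 283, 0, 313, 0, 55, 0, 309, 0, 0, 0, 0, 0, 301, 302, 301, 0, 299, 0, 0, 0, 295, 0, 0, 0, 0, 0, 0, 0, 283, 286, 285, 0, 283, 0, 0, 0, 279, 0, 0, 0, 0, 0, 0, 0, 0, 0, 0, 0, 0, 0, 0, 0, 0, 0, 0, 0, 0, 0, 0, 0, 55, 242, 185, 244, 203, 242, 185, 248, 55, 242, 213, 244, 242, 242, 241, 0, 203, 206, 109, 0, 203, 234, 233, 0, 230, 230, 229, 0, 0, 0, 0, 0, 203, 206, 213, 220, 203, 218, 0, 0, 213, 0, 213, 0, 211, 0, 0, 0, 203, 206, 205, 0, 203, 0, 0, 0, 199, 0, 0, 0, 0, 0, 0, 0, 55, 62, 185, 0, 185, 186, 185, 0, 55, 182, 181, 0, 0, 0, 0, 0, 0, 0, 0, 0, 0, 0, 0, 0, 0, 0, 0, 0, 0, 0, 0, 0, 151, 158, 157, 0, 155, 0, 0, 0, 151, 0, 0, 0, 0, 0, 0, 0, 0, 0, 0, 0, 0, 0, 0, 0, 0, 0, 0, 0, 0, 0, 0, 0, 55, 62, 109, 124, 59, 122, 0, 0, 55, 0, 117, 0,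 115, 0, 0, 0, 109, 110, 109, 0, 107, 0, 0, 0, 103, 0, 0, 0, 0, 0, 0, 0, 0, 0, 0, 0, 0, 0, 0, 0, 0, 0, 0, 0, 0, 0, 0, 0, 0, 0, 0, 0, 0, 0, 0, 0, 0, 0, 0, 0, 0, 0, 0, 0, 55, 62, 61, 0, 59, 0, 0, 0, 55, 0, 0, 0, 0, 0, 0, 0, 0, 0, 0, 0, 0, 0, 0, 0, 0, 0, 0, 0, 0, 0, 0, 0, 0, 0, 0, 0, 0, 0, 0, 0, 0, 0, 0, 0, 0, 0, 0, 0, 0, 0, 0, 0, 0, 0, 0, 0, 0, 0, 0, 0, 0, 0, 0, 0]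
def Ylist : List ℕ := [0, 0, 0, 0, 0, 0, 0, 0, 0, 0, 0, 0, 0, 0, 0, 0, 0, 0, 0, 1, 0, 0, 0, 1, 0, 0, 0, 1, 0, 0, 0, 1, 0, 0, 0, 0, 0, 0, 16, 16, 0, 0, 0, 0, 0, 0, 16, 16, 0, 0, 0, 1, 0, 17, 16, 1, 0, 0, 0, 1, 0, 17, 16, 1, 0, 0, 0, 0, 0, 0, 0, 0, 0, 0, 0, 0, 2, 2, 2, 2, 0, 0, 0, 1, 0, 0, 0, 1, 0, 0, 0, 1, 2, 2, 2, 1, 0, 0, 0, 0, 0, 0, 16, 16, 0, 0, 18, 18, 2, 2, 16, 16, 0, 0, 0, 1, 0, 17, 16, 1, 0, 19, 18, 1, 2, 2, 16, 1, 0, 0, 0, 0, 0, 0, 0, 0, 0, 8, 0, 8, 0, 8, 0, 8, 0, 0, 0, 1, 0, 0, 0, 1, 0, 8, 9, 1, 0, 8, 9, 1, 0, 0, 0, 0, 0, 0, 16, 16, 0, 8, 0, 8, 0, 8, 16, 8, 0, 0, 0, 1, 0, 17, 16, 1, 0, 8, 9, 1, 25, 8, 16, 1, 0, 0, 0, 0,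 0, 10, 0, 10, 0, 8, 0, 8, 2, 8, 2, 8, 0, 0, 0, 1, 0, 10, 11, 1, 0, 8, 9, 1, 2, 8, 2, 1, 0, 0, 0, 26, 0, 10, 16, 16, 0, 8, 18, 8, 2, 8, 16, 8, 27, 27, 27, 1, 27, 17, 16, 1, 27, 8, 9, 1, 2, 8, 16, 1, 0, 0, 0, 0, 0, 0, 0, 0, 0, 0, 0, 0, 0, 0, 0, 28, 0, 0, 0, 1, 0, 0, 0, 1, 0, 0, 0, 1, 29, 29, 29, 1, 0, 0, 0, 0, 0, 0, 16, 16, 0, 12, 0, 12, 0, 12, 16, 16, 0, 0, 0, 1, 0, 17, 16, 1, 0, 12, 13, 1, 29, 17, 16, 1, 0, 0, 0, 30, 0, 0, 0, 30, 0, 0, 0, 30, 2, 2, 2, 2, 31, 31, 31, 1, 31, 31, 31, 1, 31, 31, 31, 1, 2, 2, 2, 1, 0, 0, 0, 30, 0, 14, 16, 16, 0, 12, 18, 30, 2, 2, 16, 16, 31, 31, 31, 1, 31, 31, 16, 1, 31, 31, 31, 1, 2, 2, 16, 1, 0, 0, 0, 0, 0, 0, 20, 20, 0, 8, 0, 8,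 0, 8, 20, 8, 0, 0, 0, 1, 0, 21, 20, 1, 0, 8, 9, 1, 29, 8, 20, 1, 4, 4, 4, 4, 4, 4, 16, 16, 4, 8, 4, 8, 4, 8, 16, 8, 4, 4, 4, 1, 4, 4, 16, 1, 4, 8, 4, 1, 4, 8, 16, 1, 0, 0, 0, 30, 0, 10, 20, 30, 0, 8, 22, 8, 2, 8, 2, 8, 31, 31, 31, 1, 31, 31, 31, 1, 31, 8, 31, 1, 2, 8, 2, 1, 4, 4, 4, 4, 4, 4, 16, 16, 4, 8, 4, 8, 2, 8, 16, 8, 31, 31, 31, 1, 31, 31, 16, 1, 31, 8, 31, 1, 2, 8, 16, 1]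

def Wf (s : Finset (Fin 9)) : Finset (Fin 9) := finsetOf (Wlist.getD (maskOf s) 0)
def Yf (s : Finset (Fin 9)) : Fin 6 → ZMod 2 := fun b => if (Ylist.getD (maskOf s) 0).testBit b.val then 1 else 0
def dotN (y : Fin 3 ⊕ Fin 3 → ZMod 2) (w : Fin 3 ⊕ Fin 3 → ZMod 2) : ZMod 2 := ∑ x : Fin 3 ⊕ Fin 3, y x * w x
def Yv (s : Finset (Fin 9)) : Fin 3 ⊕ Fin 3 → ZMod 2 := fun x => Yf s (sne x)


def incVecC {V : Type*} [DecidableEq V] (e : Sym2 V) : V → ZMod 2 :=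
  fun v => if v ∈ e then 1 else 0

lemma incVec_eq {V : Type*} [DecidableEq V] :
    (incVec : Sym2 V → V → ZMod 2) = incVecC := by
  funext e v
  rw [incVec, incVecC]
  by_cases hv : v ∈ e
  · rw [if_pos hv, if_pos hv]
  · rw [if_neg hv, if_neg hv]

def wheelPlusVecC : Sym2 (Option (ZMod 4)) ⊕ Unit → (Option (ZMod 4) → ZMod 2) :=
  Sum.elim incVecC (fun _ => ∑ i : ZMod 4, incVecC s((none : Option (ZMod 4)), some i))

lemma wheelPlusVec_eq : wheelPlusVec 4 = wheelPlusVecC := by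
  rw [wheelPlusVec, wheelPlusVecC, incVec_eq]

lemma colM_eq : ∀ i, wheelPlusVec 4 (mElem i) = colM i := by
  rw [wheelPlusVec_eq]; decide

lemma colN_eq : ∀ i, incVec (nElem i) = colN i := by
  rw [incVec_eq]; decide

lemma mElem_inj : Function.Injective mElem := by decide
lemma nElem_inj : Function.Injective nElem := by decide

lemma wheel_adj_iff (a b : Option (ZMod 4)) :
    (wheelGraph 4).Adj a b ↔ a ≠ b ∧
      ((a = none ∨ ∃ i, a = some i ∧ b = some (i + 1)) ∨
       (b = none ∨ ∃ i, b = some i ∧ a = some (i + 1))) :=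
  SimpleGraph.fromRel_adj _ a b

lemma K33_adj_iff (a b : Fin 3 ⊕ Fin 3) :
    (completeBipartiteGraph (Fin 3) (Fin 3)).Adj a b ↔
      a.isLeft ∧ b.isRight ∨ a.isRight ∧ b.isLeft := Iff.rfl

lemma mElem_mem : ∀ i, mElem i ∈ wheelPlusGround 4 := by
  intro i
  fin_cases i <;>
    first
      | exact Or.inr rfl
      | exact Or.inl ⟨_, by rw [SimpleGraph.mem_edgeSet, wheel_adj_iff]; decide, rfl⟩


-- pair-based enumeration to avoid Sym2-eq decide issues
def mp : Fin 9 → Option (ZMod 4) × Option (ZMod 4) :=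
  ![(none, some 0), (none, some 1), (none, some 2), (none, some 3),
    (some 0, some 1), (some 1, some 2), (some 2, some 3), (some 3, some 0), (none, none)]

lemma mElem_eq_mk : ∀ i : Fin 9, i ≠ 8 → mElem i = Sum.inl (Quot.mk (Sym2.Rel _) (mp i)) := by decide

lemma mground_surj : ∀ x ∈ wheelPlusGround 4, ∃ i, mElem i = x := by
  have key : ∀ a b : Option (ZMod 4),
      (a ≠ b ∧ ((a = none ∨ ∃ i, a = some i ∧ b = some (i + 1)) ∨
        b = none ∨ ∃ i, b = some i ∧ a = some (i + 1))) →
      ∃ i : Fin 9, i ≠ 8 ∧ ((a, b) = mp i ∨ (b, a) = mp i) := by decide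
  rintro x (⟨y, hy, rfl⟩ | hx)
  · induction y using Sym2.ind with
  | _ a b =>
    rw [SimpleGraph.mem_edgeSet, wheel_adj_iff] at hy
    obtain ⟨i, hne, h | h⟩ := key a b hy
    · exact ⟨i, by rw [mElem_eq_mk i hne, ← h]⟩
    · exact ⟨i, by rw [mElem_eq_mk i hne, ← h]; exact congrArg _ (Sym2.eq_swap)⟩
  · exact ⟨8, hx ▸ rfl⟩

def np : Fin 9 → (Fin 3 ⊕ Fin 3) × (Fin 3 ⊕ Fin 3) :=
  ![(.inl 0, .inr 0), (.inl 0, .inr 1), (.inl 1, .inr 1), (.inl 1, .inr 0), (.inl 0, .inr 2),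
    (.inl 2, .inr 1), (.inl 1, .inr 2), (.inl 2, .inr 0), (.inl 2, .inr 2)]

lemma nElem_eq_mk : ∀ i : Fin 9, nElem i = Quot.mk (Sym2.Rel _) (np i) := by decide

lemma nground_surj : ∀ x ∈ (completeBipartiteGraph (Fin 3) (Fin 3)).edgeSet,
    ∃ i, nElem i = x := by
  have key : ∀ a b : Fin 3 ⊕ Fin 3,
      (a.isLeft ∧ b.isRight ∨ a.isRight ∧ b.isLeft) →
      ∃ i : Fin 9, (a, b) = np i ∨ (b, a) = np i := by decide
  intro x hx
  induction x using Sym2.ind with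
  | _ a b =>
    rw [SimpleGraph.mem_edgeSet, K33_adj_iff] at hx
    obtain ⟨i, h | h⟩ := key a b hx
    · exact ⟨i, by rw [nElem_eq_mk i, ← h]⟩
    · exact ⟨i, by rw [nElem_eq_mk i, ← h]; exact Sym2.eq_swap⟩

lemma nElem_mem : ∀ i, nElem i ∈ (completeBipartiteGraph (Fin 3) (Fin 3)).edgeSet := by
  intro i
  rw [nElem_eq_mk i]
  rw [show Quot.mk (Sym2.Rel _) (np i) = s((np i).1, (np i).2) from rfl]
  rw [SimpleGraph.mem_edgeSet, K33_adj_iff]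
  revert i; decide

lemma zmod2_eq_one {a : ZMod 2} (h : a ≠ 0) : a = 1 := by revert a; decide

lemma L1 {κ : Type} [Fintype κ] [DecidableEq κ] (s : Finset (Fin 9)) (v : Fin 9 → κ → ZMod 2) :
    LinearIndependent (ZMod 2) (fun i : (↑s : Set (Fin 9)) => v ↑i) ↔ IndP v s := by
  rw [← linearIndependent_equiv' ((Equiv.subtypeEquivRight (fun x => Finset.mem_coe)).symm :
    {x // x ∈ s} ≃ {x // x ∈ (↑s : Set (Fin 9))}) rfl]
  rw [Fintype.linearIndependent_iff]
  constructor
  · intro h t hts hne hsum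
    obtain ⟨j, hj⟩ := hne
    have hg : ∑ i : {x // x ∈ s}, (if ↑i ∈ t then (1 : ZMod 2) else 0) • v ↑i = 0 := by
      rw [Finset.univ_eq_attach, Finset.sum_attach s (fun x => (if x ∈ t then (1 : ZMod 2) else 0) • v x)]
      have hcong : ∑ x ∈ s, (if x ∈ t then (1 : ZMod 2) else 0) • v x
          = ∑ x ∈ s, (if x ∈ t then v x else 0) :=
        Finset.sum_congr rfl (fun i _ => by by_cases hit : i ∈ t <;> simp [hit])
      rw [hcong, Finset.sum_ite_mem, Finset.inter_eq_right.mpr hts, hsum]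
    have := h _ hg ⟨j, hts hj⟩
    simp only [hj, if_pos] at this
    exact one_ne_zero this
  · intro h g hg i
    by_contra hgi
    set t : Finset (Fin 9) := (s.attach.filter (fun i => g i ≠ 0)).image Subtype.val with ht
    have hts : t ⊆ s := by
      intro x hx
      simp only [ht, Finset.mem_image, Finset.mem_filter] at hx
      obtain ⟨⟨y, hy⟩, _, rfl⟩ := hx
      exact hy
    have hne : t.Nonempty := ⟨↑i, by
      simp only [ht, Finset.mem_image, Finset.mem_filter]
      exact ⟨i, ⟨Finset.mem_attach _ _, hgi⟩, rfl⟩⟩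
    refine h t hts hne ?_
    rw [Finset.sum_image (by intro x _ y _ h; exact Subtype.ext_iff.mpr h :
      ∀ x ∈ s.attach.filter (fun i => g i ≠ 0), ∀ y ∈ s.attach.filter (fun i => g i ≠ 0),
        (↑x : Fin 9) = ↑y → x = y)]
    rw [← hg, Finset.univ_eq_attach, Finset.sum_filter]
    apply Finset.sum_congr rfl
    intro x _
    by_cases hx : g x = 0
    · simp [hx]
    · simp [hx, zmod2_eq_one hx, Equiv.subtypeEquivRight]; rfl

section glue
variable {M : Matroid (Sym2 (Option (ZMod 4)) ⊕ Unit)} {N : Matroid (Sym2 (Fin 3 ⊕ Fin 3))}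

lemma imageEquiv_linInd {β W : Type*} [AddCommGroup W] [Module (ZMod 2) W]
    (f : Fin 9 → β) (hf : Function.Injective f) (v : β → W) (w : Fin 9 → W)
    (hw : ∀ i, v (f i) = w i) (s : Finset (Fin 9)) :
    LinearIndependent (ZMod 2) (fun x : ↑(f '' ↑s) => v ↑x) ↔
      LinearIndependent (ZMod 2) (fun i : (↑s : Set (Fin 9)) => w ↑i) := by
  have hbij : Function.Bijective (fun x : (↑s : Set (Fin 9)) =>
      (⟨f x, ⟨x.1, x.2, rfl⟩⟩ : ↑(f '' ↑s))) := by
    constructor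
    · intro x y h
      exact Subtype.ext (hf (congrArg Subtype.val h))
    · rintro ⟨_, ⟨i, hi, rfl⟩⟩
      exact ⟨⟨i, hi⟩, rfl⟩
  refine (linearIndependent_equiv' (R := ZMod 2) (M := W) (Equiv.ofBijective _ hbij)
    (f := fun x : ↑(f '' ↑s) => v ↑x) (g := fun i : (↑s : Set (Fin 9)) => w ↑i) ?_).symm
  funext x
  exact hw x.1

lemma indepM_iff (hM : IsBinRepOn M (wheelPlusGround 4) (wheelPlusVec 4)) (s : Finset (Fin 9)) :
    M.Indep (mElem '' ↑s) ↔ IndP colM s := by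
  obtain ⟨hM1, hM2⟩ := hM
  have hsub : mElem '' ↑s ⊆ wheelPlusGround 4 := by rintro _ ⟨i, _, rfl⟩; exact mElem_mem i
  rw [hM2 _ hsub, imageEquiv_linInd mElem mElem_inj _ colM colM_eq, L1]

lemma indepN_iff (hN : IsCycleMatroidOf N (completeBipartiteGraph (Fin 3) (Fin 3)))
    (s : Finset (Fin 9)) : N.Indep (nElem '' ↑s) ↔ IndP colN s := by
  have hsub : nElem '' ↑s ⊆ (completeBipartiteGraph (Fin 3) (Fin 3)).edgeSet := by
    rintro _ ⟨i, _, rfl⟩; exact nElem_mem i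
  obtain ⟨hN1, hN2⟩ := hN
  rw [hN2 _ hsub, imageEquiv_linInd nElem nElem_inj _ colN colN_eq, L1]

/-- any indep set of J ⊆ N.E is an image -/
lemma indep_eq_image (hN : IsCycleMatroidOf N (completeBipartiteGraph (Fin 3) (Fin 3)))
    {J : Set (Sym2 (Fin 3 ⊕ Fin 3))} (hJ : J ⊆ N.E) :
    J = nElem '' ↑(Finset.univ.filter (fun i => nElem i ∈ J)) := by
  ext x
  constructor
  · intro hx
    obtain ⟨i, rfl⟩ := nground_surj x (hN.1.symm ▸ hJ hx)
    exact ⟨i, by simpa using hx, rfl⟩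
  · rintro ⟨i, hi, rfl⟩
    simpa using hi

set_option maxRecDepth 1000000 in
set_option maxHeartbeats 64000000 in
lemma NcardLe : ∀ j : Finset (Fin 9), IndP colN j → j.card ≤ 5 := by decide

lemma baseN (hN : IsCycleMatroidOf N (completeBipartiteGraph (Fin 3) (Fin 3)))
    (b : Finset (Fin 9)) (hb5 : b.card = 5) (hbi : IndP colN b) : N.IsBase (nElem '' ↑b) := by
  refine Matroid.Indep.isBase_of_maximal ((indepN_iff hN b).2 hbi) ?_
  intro J hJ hsub
  have hJE : J ⊆ N.E := hJ.subset_ground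
  set j := Finset.univ.filter (fun i => nElem i ∈ J) with hj
  have hJeq : J = nElem '' ↑j := indep_eq_image hN hJE
  have hIndj : IndP colN j := (indepN_iff hN j).1 (hJeq ▸ hJ)
  have hbj : b ⊆ j := by
    intro x hx
    have : nElem x ∈ J := hsub ⟨x, hx, rfl⟩
    simpa [hj] using this
  have : b = j := Finset.eq_of_subset_of_card_le hbj (le_trans (NcardLe j hIndj) (le_of_eq hb5.symm))
  rw [hJeq, this]

lemma dotN_sum (y : Fin 3 ⊕ Fin 3 → ZMod 2) (t : Finset (Fin 9))
    (v : Fin 9 → Fin 3 ⊕ Fin 3 → ZMod 2) :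
    dotN y (∑ i ∈ t, v i) = ∑ i ∈ t, dotN y (v i) := by
  unfold dotN
  simp only [Finset.sum_apply, Finset.mul_sum]
  exact Finset.sum_comm

end glue

set_option maxRecDepth 1000000 in
set_option maxHeartbeats 64000000 in
lemma D1 : ∀ s : Finset (Fin 9), IndP colM s →
    Disjoint s (Wf s) ∧ (Wf s).card = 5 ∧ IndP colN (Wf s) := by decide

set_option maxRecDepth 1000000 in
set_option maxHeartbeats 64000000 in
lemma D2 : ∀ s : Finset (Fin 9), ¬ IndP colM s →
    (∀ j, j ∉ s → dotN (Yv s) (colN j) = 0) ∧ (∃ j, dotN (Yv s) (colN j) = 1) := by decide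

section main
variable {M : Matroid (Sym2 (Option (ZMod 4)) ⊕ Unit)} {N : Matroid (Sym2 (Fin 3 ⊕ Fin 3))}

lemma key (hM : IsBinRepOn M (wheelPlusGround 4) (wheelPlusVec 4))
    (hN : IsCycleMatroidOf N (completeBipartiteGraph (Fin 3) (Fin 3))) (s : Finset (Fin 9)) :
    M.Indep (mElem '' ↑s) ↔ N✶.Indep (nElem '' ↑s) := by
  have hsubN : nElem '' ↑s ⊆ N.E := by
    rintro _ ⟨i, _, rfl⟩; exact hN.1.symm ▸ nElem_mem i
  rw [indepM_iff hM s, Matroid.dual_indep_iff_exists']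
  constructor
  · intro hs
    obtain ⟨hdisj, hcard, hindN⟩ := D1 s hs
    refine ⟨hsubN, nElem '' ↑(Wf s), baseN hN (Wf s) hcard hindN, ?_⟩
    rw [Set.disjoint_image_iff nElem_inj, Finset.disjoint_coe]
    exact hdisj
  · rintro ⟨hsub, B, hB, hdisj⟩
    by_contra hns
    obtain ⟨hzero, j0, hj1⟩ := D2 s hns
    set bF := Finset.univ.filter (fun i => nElem i ∈ B) with hbF
    have hBeq : B = nElem '' ↑bF := indep_eq_image hN hB.indep.subset_ground
    have hIndb : IndP colN bF := (indepN_iff hN bF).1 (hBeq ▸ hB.indep)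
    have hbns : ∀ i ∈ bF, i ∉ s := by
      intro i hib his
      have h1 : nElem i ∈ nElem '' ↑s := ⟨i, his, rfl⟩
      have h2 : nElem i ∈ B := by simpa [hbF] using hib
      exact Set.disjoint_left.mp hdisj h1 h2
    have hall : ∀ j : Fin 9, dotN (Yv s) (colN j) = 0 := by
      intro j
      by_cases hjs : j ∈ s
      · have hjB : nElem j ∉ B := fun h => hbns j (by simpa [hbF] using h) hjs
        have hdep := (hB.insert_dep ⟨hN.1.symm ▸ nElem_mem j, hjB⟩).not_indep
        have himg : insert (nElem j) B = nElem '' ↑(insert j bF) := by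
          rw [hBeq, Finset.coe_insert, Set.image_insert_eq]
        rw [himg, indepN_iff hN] at hdep
        rw [IndP] at hdep
        push_neg at hdep
        obtain ⟨t, hts, hne, hzero'⟩ := hdep
        have hjt : j ∈ t := by
          by_contra hjt
          have htb : t ⊆ bF := fun x hx => by
            rcases Finset.mem_insert.mp (hts hx) with h | h
            · exact absurd (h ▸ hx) hjt
            · exact h
          exact hIndb t htb hne hzero'
        have hsum : colN j + ∑ i ∈ t.erase j, colN i = 0 := by
          rw [Finset.add_sum_erase _ _ hjt]; exact hzero'
        have hcolj : colN j = ∑ i ∈ t.erase j, colN i := by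
          have h1 : colN j = -∑ i ∈ t.erase j, colN i := eq_neg_of_add_eq_zero_left hsum
          rw [h1]
          funext x
          simp only [Pi.neg_apply]
          exact CharTwo.neg_eq _
        rw [hcolj, dotN_sum]
        apply Finset.sum_eq_zero
        intro i hi
        have hib : i ∈ bF := by
          rcases Finset.mem_insert.mp (hts (Finset.mem_of_mem_erase hi)) with h | h
          · exact absurd h (Finset.ne_of_mem_erase hi)
          · exact h
        exact hzero i (hbns i hib)
      · exact hzero j hjs
    rw [hall j0] at hj1
    exact absurd hj1 (by decide)

theorem mainIso (hM : IsBinRepOn M (wheelPlusGround 4) (wheelPlusVec 4))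
    (hN : IsCycleMatroidOf N (completeBipartiteGraph (Fin 3) (Fin 3))) :
    MatroidIso M N✶ := by
  have eMbij : Function.Bijective (fun i : Fin 9 => (⟨mElem i, hM.1.symm ▸ mElem_mem i⟩ : ↥(M.E))) := by
    constructor
    · intro i j h
      exact mElem_inj (congrArg Subtype.val h)
    · rintro ⟨x, hx⟩
      obtain ⟨i, rfl⟩ := mground_surj x (hM.1 ▸ hx)
      exact ⟨i, rfl⟩
  have eNbij : Function.Bijective (fun i : Fin 9 => (⟨nElem i, hN.1.symm ▸ nElem_mem i⟩ : ↥(N✶.E))) := by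
    constructor
    · intro i j h
      exact nElem_inj (congrArg Subtype.val h)
    · rintro ⟨x, hx⟩
      obtain ⟨i, rfl⟩ := nground_surj x (hN.1 ▸ hx)
      exact ⟨i, rfl⟩
  set eM := Equiv.ofBijective _ eMbij
  set eN := Equiv.ofBijective _ eNbij
  refine ⟨eM.symm.trans eN, ?_⟩
  intro I
  set s : Finset (Fin 9) := Finset.univ.filter (fun i => eM i ∈ I) with hs
  have h1 : Subtype.val '' I = mElem '' ↑s := by
    ext x
    constructor
    · rintro ⟨y, hy, rfl⟩
      refine ⟨eM.symm y, ?_, ?_⟩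
      · simp only [hs, Finset.coe_filter, Set.mem_setOf_eq, Finset.mem_univ, true_and]
        rwa [Equiv.apply_symm_apply]
      · exact congrArg Subtype.val (Equiv.apply_symm_apply eM y)
    · rintro ⟨i, hi, rfl⟩
      simp only [hs, Finset.coe_filter, Set.mem_setOf_eq, Finset.mem_univ, true_and] at hi
      exact ⟨eM i, hi, rfl⟩
  have h2 : Subtype.val '' ((eM.symm.trans eN) '' I) = nElem '' ↑s := by
    ext x
    constructor
    · rintro ⟨_, ⟨y, hy, rfl⟩, rfl⟩
      refine ⟨eM.symm y, ?_, rfl⟩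
      simp only [hs, Finset.coe_filter, Set.mem_setOf_eq, Finset.mem_univ, true_and]
      rwa [Equiv.apply_symm_apply]
    · rintro ⟨i, hi, rfl⟩
      simp only [hs, Finset.coe_filter, Set.mem_setOf_eq, Finset.mem_univ, true_and] at hi
      exact ⟨eN i, ⟨eM i, hi, by rw [Equiv.trans_apply, Equiv.symm_apply_apply]⟩, rfl⟩
  rw [h1, h2]
  exact key hM hN s

end main

end Auxiliary

/-- `M_4`, the extension of `M(W_4)` by γ with fundamental circuit `B ∪ {γ}`,
is isomorphic to the dual of the cycle matroid of `K_{3,3}`. -/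
theorem statement3 (M : Matroid (Sym2 (Option (ZMod 4)) ⊕ Unit))
    (N : Matroid (Sym2 (Fin 3 ⊕ Fin 3)))
    (hM : IsBinRepOn M (wheelPlusGround 4) (wheelPlusVec 4))
    (hN : IsCycleMatroidOf N (completeBipartiteGraph (Fin 3) (Fin 3))) :
    MatroidIso M N✶ := mainIso hM hN
end

section
/- Let r ≥ 6 be even, and let M_{r+1} be the binary extension of the rank-(r+1) wheel M(W_{r+1}) by an element γ whose fundamental circuit with the spoke basis is the whole spoke basis together with γ. Label the spokes in cyclic order x_0, x_1, …, x_r and let {x_i, y_i, x_{i+1}} be the rim triangles (indices mod r+1). Then for each i with 0 ≤ i ≤ r, the set {y_i, x_{i+1}, y_{i+1}, γ} is a cocircuit of M_{r+1}. -/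
open Set Matroid
open scoped Classical

/-- The spoke `x_i` of `M_{r+1}`. -/
def xe (r : ℕ) (i : ZMod (r + 1)) : ZMod (r + 1) ⊕ (ZMod (r + 1) ⊕ Unit) := Sum.inl i

/-- The rim element `y_i` of `M_{r+1}`, lying in the triangle `{x_i, y_i, x_{i+1}}`. -/
def ye (r : ℕ) (i : ZMod (r + 1)) : ZMod (r + 1) ⊕ (ZMod (r + 1) ⊕ Unit) :=
  Sum.inr (Sum.inl i)

/-- The extension element γ of `M_{r+1}`. -/
def ge (r : ℕ) : ZMod (r + 1) ⊕ (ZMod (r + 1) ⊕ Unit) := Sum.inr (Sum.inr ())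

/-- The binary representation of `M_{r+1}`: the wheel `W_{r+1}` has hub `none` and rim vertices
`some i`; the spoke `x_i` and rim edge `y_i` get their incidence vectors, and γ is represented
by the sum of the spoke vectors, so that its fundamental circuit with respect to the spoke
basis `B = {x_0, …, x_r}` is `B ∪ {γ}`. -/
noncomputable def mWVec (r : ℕ) :
    ZMod (r + 1) ⊕ (ZMod (r + 1) ⊕ Unit) → (Option (ZMod (r + 1)) → ZMod 2) :=
  Sum.elim (fun i => incVec s((none : Option (ZMod (r + 1))), some i))
    (Sum.elim (fun i => incVec s((some i : Option (ZMod (r + 1))), some (i + 1)))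
      (fun _ => ∑ i : ZMod (r + 1), incVec s((none : Option (ZMod (r + 1))), some i)))
section lemmas
variable (r : ℕ)

lemma wx_none (j : ZMod (r+1)) : mWVec r (xe r j) none = 1 := by simp [mWVec, xe, incVec]
lemma wx_some (j k : ZMod (r+1)) : mWVec r (xe r j) (some k) = if k = j then 1 else 0 := by
  simp [mWVec, xe, incVec]
lemma wy_none (j : ZMod (r+1)) : mWVec r (ye r j) none = 0 := by simp [mWVec, ye, incVec]
lemma wy_some (j k : ZMod (r+1)) :
    mWVec r (ye r j) (some k) = if k = j ∨ k = j + 1 then 1 else 0 := by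
  simp [mWVec, ye, incVec]
lemma wg_eq : mWVec r (ge r) = ∑ j : ZMod (r+1), mWVec r (xe r j) := by simp [mWVec, ge, xe]
lemma wg_some (k : ZMod (r+1)) : mWVec r (ge r) (some k) = 1 := by
  rw [wg_eq, Finset.sum_apply]; simp only [wx_some]; simp

lemma xe_inj : Function.Injective (xe r) := fun a b h => by simpa [xe] using h

lemma spokes_li : LinearIndependent (ZMod 2) (fun j : ZMod (r+1) => mWVec r (xe r j)) := by
  rw [Fintype.linearIndependent_iff]
  intro g hg k
  have h := congrFun hg (some k)
  simp only [Finset.sum_apply, Pi.smul_apply, Pi.zero_apply, smul_eq_mul, wx_some] at h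
  rwa [Finset.sum_eq_single k (fun j _ hj => by rw [if_neg (fun h => hj h.symm), mul_zero])
    (fun h => absurd (Finset.mem_univ k) h), if_pos rfl, mul_one] at h

lemma span_coord {S : Set (ZMod (r + 1) ⊕ (ZMod (r + 1) ⊕ Unit))} {t : ZMod (r+1)}
    (h : ∀ e ∈ S, mWVec r e (some t) = 0) :
    ∀ u ∈ Submodule.span (ZMod 2) (mWVec r '' S), u (some t) = 0 := by
  intro u hu
  have hle : Submodule.span (ZMod 2) (mWVec r '' S) ≤
      LinearMap.ker (LinearMap.proj (R := ZMod 2) (φ := fun _ : Option (ZMod (r+1)) => ZMod 2)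
        (some t)) := by
    rw [Submodule.span_le]
    rintro _ ⟨e, he, rfl⟩
    simpa [LinearMap.mem_ker] using h e he
  simpa [LinearMap.mem_ker] using hle hu

variable (hr : 6 ≤ r)
include hr

lemma zmod_one_ne_zero : (1 : ZMod (r+1)) ≠ 0 := by
  haveI : Fact (1 < r + 1) := ⟨by omega⟩
  exact one_ne_zero

lemma succ_ne (j : ZMod (r+1)) : j ≠ j + 1 := by
  intro h
  exact zmod_one_ne_zero r hr (by rwa [left_eq_add] at h)

variable {M : Matroid (ZMod (r + 1) ⊕ (ZMod (r + 1) ⊕ Unit))}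
  (hM : IsBinRepOn M univ (mWVec r))
include hM

omit hr in
lemma repIndep (I : Set (ZMod (r + 1) ⊕ (ZMod (r + 1) ⊕ Unit))) :
    M.Indep I ↔ LinearIndependent (ZMod 2) (fun x : I => mWVec r x) :=
  hM.2 I (subset_univ I)

omit hr in
lemma spokes_indep : M.Indep (range (xe r)) := by
  rw [repIndep r hM]
  exact (linearIndependent_equiv' (Equiv.ofInjective (xe r) (xe_inj r))
    (by funext j; simp)).1 (spokes_li r)

lemma spokes_base : M.IsBase (range (xe r)) := by
  refine (spokes_indep r hM).isBase_of_maximal fun J hJ hBJ => ?_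
  by_contra hne
  obtain ⟨e, heJ, heB⟩ := exists_of_ssubset (hBJ.ssubset_of_ne hne)
  have hins : M.Indep (insert e (range (xe r))) := hJ.subset (insert_subset heJ hBJ)
  rw [repIndep r hM] at hins; change LinearIndepOn (ZMod 2) (mWVec r) _ at hins; rw [linearIndepOn_insert heB] at hins
  apply hins.2
  have hspan : ∀ j, mWVec r (xe r j) ∈ Submodule.span (ZMod 2) (mWVec r '' range (xe r)) :=
    fun j => Submodule.subset_span ⟨xe r j, ⟨j, rfl⟩, rfl⟩
  match e with
  | Sum.inl j => exact absurd ⟨j, rfl⟩ heB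
  | Sum.inr (Sum.inl j) =>
      have hv : mWVec r (ye r j) = mWVec r (xe r j) + mWVec r (xe r (j+1)) := by
        funext o
        match o with
        | none => rw [Pi.add_apply, wy_none, wx_none, wx_none]; decide
        | some k =>
          rw [Pi.add_apply, wy_some, wx_some, wx_some]
          by_cases h1 : k = j
          · rw [if_pos (Or.inl h1), if_pos h1,
              if_neg (fun h => succ_ne r hr j (h1.symm.trans h))]
            decide
          · by_cases h2 : k = j + 1
            · rw [if_pos (Or.inr h2), if_neg h1, if_pos h2]; decide
            · rw [if_neg (by tauto), if_neg h1, if_neg h2]; decide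
      show mWVec r (ye r j) ∈ _
      rw [hv]
      exact Submodule.add_mem _ (hspan j) (hspan (j+1))
  | Sum.inr (Sum.inr u) =>
      show mWVec r (ge r) ∈ _
      rw [wg_eq]
      exact Submodule.sum_mem _ fun j _ => hspan j

end lemmas

section main
variable (r : ℕ) (hr : 6 ≤ r)

/-- The spokes other than `x_{i+1}`. -/
def Sp (i : ZMod (r+1)) : Set (ZMod (r + 1) ⊕ (ZMod (r + 1) ⊕ Unit)) :=
  xe r '' {j | j ≠ i + 1}

lemma sp_coord0 (i : ZMod (r+1)) :
    ∀ e ∈ Sp r i, mWVec r e (some (i+1)) = 0 := by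
  rintro _ ⟨j, hj, rfl⟩
  rw [wx_some, if_neg (fun h => hj h.symm)]

lemma sp_eq (i : ZMod (r+1)) : range (xe r) \ {xe r (i+1)} = Sp r i := by
  ext e
  constructor
  · rintro ⟨⟨j, rfl⟩, hne⟩
    exact ⟨j, fun h => hne (by rw [h]; rfl), rfl⟩
  · rintro ⟨j, hj, rfl⟩
    exact ⟨⟨j, rfl⟩, fun h => hj (xe_inj r (mem_singleton_iff.1 h))⟩

lemma sp_li (i : ZMod (r+1)) :
    LinearIndependent (ZMod 2) (fun x : Sp r i => mWVec r x) := by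
  have hinj : Function.Injective (fun j : {j : ZMod (r+1) | j ≠ i + 1} => xe r j.val) :=
    fun a b h => Subtype.ext (xe_inj r h)
  rw [show Sp r i = range (fun j : {j : ZMod (r+1) | j ≠ i + 1} => xe r j.val) from
    Set.image_eq_range _ _]
  exact (linearIndependent_equiv' (Equiv.ofInjective _ hinj) (by funext j; simp)).1
    ((spokes_li r).comp Subtype.val Subtype.val_injective)

variable {M : Matroid (ZMod (r + 1) ⊕ (ZMod (r + 1) ⊕ Unit))}
  (hM : IsBinRepOn M univ (mWVec r))
include hM

lemma exch_indep (i : ZMod (r+1)) (w : ZMod (r + 1) ⊕ (ZMod (r + 1) ⊕ Unit))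
    (hw1 : mWVec r w (some (i+1)) = 1) : M.Indep (insert w (Sp r i)) := by
  have hnot : w ∉ Sp r i := fun hmem => by
    have := sp_coord0 r i w hmem; rw [hw1] at this; exact one_ne_zero this
  rw [repIndep r hM]; change LinearIndepOn (ZMod 2) (mWVec r) _; rw [linearIndepOn_insert hnot]
  refine ⟨sp_li r i, fun hmem => ?_⟩
  have := span_coord r (sp_coord0 r i) _ hmem
  rw [hw1] at this
  exact one_ne_zero this

include hr in
lemma exch_base (i : ZMod (r+1)) (w : ZMod (r + 1) ⊕ (ZMod (r + 1) ⊕ Unit))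
    (hw1 : mWVec r w (some (i+1)) = 1) (hwB : ∀ j, w = xe r j → j = i + 1) :
    M.IsBase (insert w (Sp r i)) := by
  by_cases hwB0 : w ∈ range (xe r)
  · obtain ⟨j, rfl⟩ := hwB0
    have hj := hwB j rfl
    subst hj
    have heq : insert (xe r (i+1)) (Sp r i) = range (xe r) := by
      have hmem : xe r (i+1) ∈ range (xe r) := ⟨i+1, rfl⟩
      rw [← sp_eq r i, insert_diff_singleton, insert_eq_self.2 hmem]
    rw [heq]
    exact spokes_base r hr hM
  · have hbase := (spokes_base r hr hM).exchange_isBase_of_indep (e := xe r (i+1)) hwB0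
      (by rw [sp_eq r i]; exact exch_indep r hM i w hw1)
    rwa [sp_eq r i] at hbase

end main

section final
variable (r : ℕ) (hr : 6 ≤ r) (i : ZMod (r+1))

lemma coordC (e : ZMod (r + 1) ⊕ (ZMod (r + 1) ⊕ Unit))
    (he : e ∉ ({ye r i, xe r (i + 1), ye r (i + 1), ge r} :
      Set (ZMod (r + 1) ⊕ (ZMod (r + 1) ⊕ Unit)))) :
    mWVec r e (some (i+1)) = 0 := by
  match e with
  | Sum.inl j =>
    show mWVec r (xe r j) _ = 0
    rw [wx_some]
    refine if_neg fun h => he ?_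
    subst h
    simp [xe]
  | Sum.inr (Sum.inl j) =>
    show mWVec r (ye r j) _ = 0
    rw [wy_some]
    refine if_neg ?_
    rintro (h | h)
    · subst h; exact he (by simp [ye])
    · have : j = i := by
        have := add_right_cancel h.symm
        exact this
      subst this
      exact he (by simp [ye])
  | Sum.inr (Sum.inr ()) =>
    exact absurd (show (Sum.inr (Sum.inr ()) : ZMod (r + 1) ⊕ (ZMod (r + 1) ⊕ Unit)) ∈ _ from
      by simp [ge]) he

variable {M : Matroid (ZMod (r + 1) ⊕ (ZMod (r + 1) ⊕ Unit))}
  (hM : IsBinRepOn M univ (mWVec r))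
include hr hM

theorem statement7' :
    mCocircuit M {ye r i, xe r (i + 1), ye r (i + 1), ge r} := by
  have hMdE : M✶.E = univ := by rw [dual_ground, hM.1]
  have hySp : ∀ j, ye r j ∉ Sp r i := by rintro j ⟨k, -, h⟩; simp [xe, ye] at h
  have hgSp : ge r ∉ Sp r i := by rintro ⟨k, -, h⟩; simp [xe, ge] at h
  have hxSp : xe r (i+1) ∉ Sp r i := by rintro ⟨k, hk, h⟩; exact hk (xe_inj r h)
  have hne1 : ye r i ≠ ye r (i+1) := by simpa [ye] using succ_ne r hr i
  refine ⟨by rw [hMdE]; exact subset_univ _, ?_, ?_⟩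
  · intro hind
    obtain ⟨-, B, hB, hdisj⟩ := dual_indep_iff_exists'.1 hind
    have hxB : xe r (i+1) ∉ B := disjoint_left.1 hdisj (by simp)
    have hins : M.Indep (insert (xe r (i+1)) B) := by
      rw [repIndep r hM]; change LinearIndepOn (ZMod 2) (mWVec r) _; rw [linearIndepOn_insert hxB]
      refine ⟨(repIndep r hM B).1 hB.indep, fun hmem => ?_⟩
      have h0 : ∀ e ∈ B, mWVec r e (some (i+1)) = 0 := fun e heB =>
        coordC r i e (fun hC' => disjoint_left.1 hdisj hC' heB)
      have := span_coord r h0 _ hmem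
      rw [wx_some, if_pos rfl] at this
      exact one_ne_zero this
    exact (hB.insert_dep ⟨by rw [hM.1]; trivial, hxB⟩).not_indep hins
  · intro x hx
    rw [dual_indep_iff_exists']
    refine ⟨by rw [hM.1]; exact subset_univ _, ?_⟩
    simp only [mem_insert_iff, mem_singleton_iff] at hx
    rcases hx with rfl | rfl | rfl | rfl
    · refine ⟨insert (ye r i) (Sp r i),
        exch_base r hr hM i (ye r i) (by rw [wy_some]; exact if_pos (Or.inr rfl))
          (fun j h => absurd h (by simp [ye, xe])), ?_⟩
      rw [disjoint_left]
      rintro a ⟨haC, hax⟩ haB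
      simp only [mem_insert_iff, mem_singleton_iff] at haC
      rw [mem_singleton_iff] at hax
      rcases haC with rfl | rfl | rfl | rfl
      · exact hax rfl
      · rcases mem_insert_iff.1 haB with h | h
        · simp [xe, ye] at h
        · exact hxSp h
      · rcases mem_insert_iff.1 haB with h | h
        · exact hne1 h.symm
        · exact hySp _ h
      · rcases mem_insert_iff.1 haB with h | h
        · simp [ge, ye] at h
        · exact hgSp h
    · refine ⟨range (xe r), spokes_base r hr hM, ?_⟩
      rw [disjoint_left]
      rintro a ⟨haC, hax⟩ ⟨j, rfl⟩
      simp only [mem_insert_iff, mem_singleton_iff] at haC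
      rw [mem_singleton_iff] at hax
      rcases haC with h | h | h | h
      · simp [xe, ye] at h
      · exact hax h
      · simp [xe, ye] at h
      · simp [xe, ge] at h
    · refine ⟨insert (ye r (i+1)) (Sp r i),
        exch_base r hr hM i (ye r (i+1)) (by rw [wy_some]; exact if_pos (Or.inl rfl))
          (fun j h => absurd h (by simp [ye, xe])), ?_⟩
      rw [disjoint_left]
      rintro a ⟨haC, hax⟩ haB
      simp only [mem_insert_iff, mem_singleton_iff] at haC
      rw [mem_singleton_iff] at hax
      rcases haC with rfl | rfl | rfl | rfl
      · rcases mem_insert_iff.1 haB with h | h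
        · exact hne1 h
        · exact hySp _ h
      · rcases mem_insert_iff.1 haB with h | h
        · simp [xe, ye] at h
        · exact hxSp h
      · exact hax rfl
      · rcases mem_insert_iff.1 haB with h | h
        · simp [ge, ye] at h
        · exact hgSp h
    · refine ⟨insert (ge r) (Sp r i),
        exch_base r hr hM i (ge r) (wg_some r (i+1))
          (fun j h => absurd h (by simp [ge, xe])), ?_⟩
      rw [disjoint_left]
      rintro a ⟨haC, hax⟩ haB
      simp only [mem_insert_iff, mem_singleton_iff] at haC
      rw [mem_singleton_iff] at hax
      rcases haC with rfl | rfl | rfl | rfl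
      · rcases mem_insert_iff.1 haB with h | h
        · simp [ge, ye] at h
        · exact hySp _ h
      · rcases mem_insert_iff.1 haB with h | h
        · simp [ge, xe] at h
        · exact hxSp h
      · rcases mem_insert_iff.1 haB with h | h
        · simp [ge, ye] at h
        · exact hySp _ h
      · exact hax rfl

end final

/-- For even `r ≥ 6` and each `i`, the set `{y_i, x_{i+1}, y_{i+1}, γ}` is a cocircuit
of `M_{r+1}`. -/
theorem statement7 (r : ℕ) (hr : 6 ≤ r) (hre : Even r)
    (M : Matroid (ZMod (r + 1) ⊕ (ZMod (r + 1) ⊕ Unit)))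
    (hM : IsBinRepOn M univ (mWVec r)) (i : ZMod (r + 1)) :
    mCocircuit M {ye r i, xe r (i + 1), ye r (i + 1), ge r} := by
  exact statement7' r hr i hM
end

section
/- Let r ≥ 6 be even and let M_{r+1} be the binary extension of the rank-(r+1) wheel by γ as above, with spokes x_0,…,x_r in cyclic order and rim triangles {x_i,y_i,x_{i+1}}. Then the set C = {x_0, x_1, …, x_{r−2}, y_{r−1}, γ} is a circuit of M_{r+1}. -/
open Set Matroid
open scoped Classical

variable {r : ℕ}

lemma hx_some (i j : ZMod (r+1)) :
    mWVec r (Sum.inl i) (some j) = if j = i then 1 else 0 := by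
  simp [mWVec, incVec, Sym2.mem_iff]

lemma hx_none (i : ZMod (r+1)) : mWVec r (Sum.inl i) none = 1 := by
  simp [mWVec, incVec, Sym2.mem_iff]

lemma hy_some (i j : ZMod (r+1)) :
    mWVec r (Sum.inr (Sum.inl i)) (some j) = if j = i ∨ j = i + 1 then 1 else 0 := by
  simp [mWVec, incVec, Sym2.mem_iff]

lemma hy_none (i : ZMod (r+1)) : mWVec r (Sum.inr (Sum.inl i)) none = 0 := by
  simp [mWVec, incVec, Sym2.mem_iff]

lemma hg_some (j : ZMod (r+1)) : mWVec r (Sum.inr (Sum.inr ())) (some j) = 1 := by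
  have h : mWVec r (Sum.inr (Sum.inr ())) (some j)
      = ∑ i : ZMod (r+1), (if j = i then (1:ZMod 2) else 0) := by
    rw [mWVec]
    simp only [Sum.elim_inr, Finset.sum_apply]
    exact Finset.sum_congr rfl fun i _ => by simp [incVec, Sym2.mem_iff]
  rw [h]
  simp

lemma hg_none : mWVec r (Sum.inr (Sum.inr ())) none = ((r+1 : ℕ) : ZMod 2) := by
  have h : mWVec r (Sum.inr (Sum.inr ())) none
      = ∑ _i : ZMod (r+1), (1:ZMod 2) := by
    rw [mWVec]
    simp only [Sum.elim_inr, Finset.sum_apply]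
    exact Finset.sum_congr rfl fun i _ => by simp [incVec, Sym2.mem_iff]
  rw [h]
  simp [ZMod.card]

lemma cast_inj_le {a b : ℕ} (ha : a ≤ r) (hb : b ≤ r) :
    (((a : ℕ) : ZMod (r+1)) = ((b : ℕ) : ZMod (r+1))) ↔ a = b := by
  constructor
  · intro h
    have := congrArg ZMod.val h
    rwa [ZMod.val_cast_of_lt (by omega), ZMod.val_cast_of_lt (by omega)] at this
  · rintro rfl; rfl


lemma hr1cast (hr : 6 ≤ r) :
    (((r-1:ℕ)) : ZMod (r+1)) + 1 = ((r : ℕ) : ZMod (r+1)) := by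
  have h : (((r - 1 : ℕ)) : ZMod (r+1)) + 1 = ((r - 1 + 1 : ℕ) : ZMod (r+1)) := by push_cast; ring
  rw [h, Nat.sub_add_cancel (by omega)]

lemma key_s8 (r : ℕ) (hr : 6 ≤ r)
    (s : Finset (ZMod (r + 1) ⊕ (ZMod (r + 1) ⊕ Unit)))
    (hs : ∀ e ∈ s, (∃ k : ℕ, k ≤ r - 2 ∧ e = Sum.inl ((k : ℕ) : ZMod (r + 1))) ∨
      e = Sum.inr (Sum.inl (((r - 1 : ℕ) : ZMod (r + 1)))) ∨ e = Sum.inr (Sum.inr ()))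
    (h : ∑ e ∈ s, mWVec r e = 0) :
    s = ∅ ∨ ∀ e : ZMod (r + 1) ⊕ (ZMod (r + 1) ⊕ Unit),
      ((∃ k : ℕ, k ≤ r - 2 ∧ e = Sum.inl ((k : ℕ) : ZMod (r + 1))) ∨
      e = Sum.inr (Sum.inl (((r - 1 : ℕ) : ZMod (r + 1)))) ∨ e = Sum.inr (Sum.inr ())) → e ∈ s := by
  have stepA : ∀ k : ℕ, k ≤ r - 2 →
      ((Sum.inl ((k:ℕ): ZMod (r+1)) : ZMod (r + 1) ⊕ (ZMod (r + 1) ⊕ Unit)) ∈ s ↔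
        Sum.inr (Sum.inr ()) ∈ s) := by
    intro k hk
    have h0 : (∑ e ∈ s, mWVec r e) (some ((k:ℕ): ZMod (r+1))) = 0 := by rw [h]; rfl
    rw [Finset.sum_apply] at h0
    have hterm : ∀ e ∈ s, mWVec r e (some ((k:ℕ): ZMod (r+1))) =
        (if e = Sum.inl ((k:ℕ): ZMod (r+1)) then (1:ZMod 2) else 0) +
        (if e = Sum.inr (Sum.inr ()) then (1:ZMod 2) else 0) := by
      intro e he
      rcases hs e he with ⟨m, hm, rfl⟩ | rfl | rfl
      · rw [hx_some]
        by_cases hkm : m = k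
        · subst hkm; simp
        · have h1 : ¬ (((k:ℕ): ZMod (r+1)) = ((m:ℕ): ZMod (r+1))) := fun hc =>
            hkm (((cast_inj_le (by omega) (by omega)).mp hc).symm)
          have h2 : (Sum.inl ((m:ℕ): ZMod (r+1)) : ZMod (r + 1) ⊕ (ZMod (r + 1) ⊕ Unit)) ≠
              Sum.inl ((k:ℕ): ZMod (r+1)) := fun hc =>
            hkm ((cast_inj_le (by omega) (by omega)).mp (Sum.inl.inj hc))
          simp [h1, h2]
      · rw [hy_some, hr1cast hr]
        have h1 : ¬ (((k:ℕ): ZMod (r+1)) = ((r-1:ℕ): ZMod (r+1))) := fun hc => by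
          have := (cast_inj_le (by omega) (by omega)).mp hc; omega
        have h2 : ¬ (((k:ℕ): ZMod (r+1)) = ((r:ℕ): ZMod (r+1))) := fun hc => by
          have := (cast_inj_le (by omega) (le_refl r)).mp hc; omega
        simp [h1, h2]
      · rw [hg_some]; simp
    rw [Finset.sum_congr rfl hterm, Finset.sum_add_distrib, Finset.sum_ite_eq',
      Finset.sum_ite_eq'] at h0
    constructor
    · intro hx
      by_contra hg
      rw [if_pos hx, if_neg hg] at h0
      simp at h0
    · intro hg
      by_contra hx
      rw [if_neg hx, if_pos hg] at h0
      simp at h0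
  have stepB :
      ((Sum.inr (Sum.inl (((r-1:ℕ) : ZMod (r+1)))) : ZMod (r + 1) ⊕ (ZMod (r + 1) ⊕ Unit)) ∈ s ↔
        Sum.inr (Sum.inr ()) ∈ s) := by
    have h0 : (∑ e ∈ s, mWVec r e) (some ((r-1:ℕ): ZMod (r+1))) = 0 := by rw [h]; rfl
    rw [Finset.sum_apply] at h0
    have hterm : ∀ e ∈ s, mWVec r e (some ((r-1:ℕ): ZMod (r+1))) =
        (if e = Sum.inr (Sum.inl (((r-1:ℕ) : ZMod (r+1)))) then (1:ZMod 2) else 0) +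
        (if e = Sum.inr (Sum.inr ()) then (1:ZMod 2) else 0) := by
      intro e he
      rcases hs e he with ⟨m, hm, rfl⟩ | rfl | rfl
      · rw [hx_some]
        have h1 : ¬ (((r-1:ℕ): ZMod (r+1)) = ((m:ℕ): ZMod (r+1))) := fun hc => by
          have := (cast_inj_le (by omega) (by omega)).mp hc; omega
        simp [h1]
      · rw [hy_some]
        simp
      · rw [hg_some]; simp
    rw [Finset.sum_congr rfl hterm, Finset.sum_add_distrib, Finset.sum_ite_eq',
      Finset.sum_ite_eq'] at h0
    constructor
    · intro hx
      by_contra hg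
      rw [if_pos hx, if_neg hg] at h0
      simp at h0
    · intro hg
      by_contra hx
      rw [if_neg hx, if_pos hg] at h0
      simp at h0
  by_cases hg : (Sum.inr (Sum.inr ()) : ZMod (r + 1) ⊕ (ZMod (r + 1) ⊕ Unit)) ∈ s
  · right
    intro e he
    rcases he with ⟨k, hk, rfl⟩ | rfl | rfl
    · exact (stepA k hk).mpr hg
    · exact stepB.mpr hg
    · exact hg
  · left
    rw [Finset.eq_empty_iff_forall_notMem]
    intro e he
    rcases hs e he with ⟨k, hk, rfl⟩ | rfl | rfl
    · exact hg ((stepA k hk).mp he)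
    · exact hg (stepB.mp he)
    · exact hg he

lemma totsum (r : ℕ) (hr : 6 ≤ r) (hre : Even r) :
    ∑ e ∈ ((Finset.range (r-1)).image
        (fun k => (Sum.inl ((k:ℕ): ZMod (r+1)) : ZMod (r + 1) ⊕ (ZMod (r + 1) ⊕ Unit)))) ∪
      {Sum.inr (Sum.inl (((r-1:ℕ) : ZMod (r+1)))), Sum.inr (Sum.inr ())}, mWVec r e = 0 := by
  have hdisj : Disjoint ((Finset.range (r-1)).image
      (fun k => (Sum.inl ((k:ℕ): ZMod (r+1)) : ZMod (r + 1) ⊕ (ZMod (r + 1) ⊕ Unit))))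
      ({Sum.inr (Sum.inl (((r-1:ℕ) : ZMod (r+1)))), Sum.inr (Sum.inr ())} :
        Finset (ZMod (r + 1) ⊕ (ZMod (r + 1) ⊕ Unit))) := by
    rw [Finset.disjoint_left]
    intro a ha
    rw [Finset.mem_image] at ha
    obtain ⟨k, _, rfl⟩ := ha
    simp
  rw [Finset.sum_union hdisj,
    Finset.sum_image (by
      intro a ha b hb hab
      rw [Finset.mem_coe, Finset.mem_range] at ha hb
      exact (cast_inj_le (by omega) (by omega)).mp (Sum.inl.inj hab)),
    Finset.sum_pair (by simp)]
  funext x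
  simp only [Pi.add_apply, Finset.sum_apply, Pi.zero_apply]
  cases x with
  | none =>
    rw [hy_none, hg_none]
    have hc : ∀ k ∈ Finset.range (r-1), mWVec r
        (Sum.inl ((k:ℕ): ZMod (r+1)) : ZMod (r + 1) ⊕ (ZMod (r + 1) ⊕ Unit)) none = 1 :=
      fun k _ => hx_none _
    rw [Finset.sum_congr rfl hc, Finset.sum_const, Finset.card_range, nsmul_eq_mul, mul_one]
    rw [zero_add, ← Nat.cast_add]
    have h2r : r - 1 + (r + 1) = 2 * r := by omega
    rw [h2r, Nat.cast_mul, (by decide : ((2:ℕ):ZMod 2) = 0), zero_mul]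
  | some j =>
    have hm : j.val ≤ r := by have := j.val_lt; omega
    have hj : ((j.val : ℕ) : ZMod (r+1)) = j := ZMod.natCast_rightInverse j
    rw [hy_some, hg_some, hr1cast hr]
    have hc : ∀ k ∈ Finset.range (r-1),
        mWVec r (Sum.inl ((k:ℕ): ZMod (r+1)) : ZMod (r + 1) ⊕ (ZMod (r + 1) ⊕ Unit)) (some j) =
        if j.val = k then 1 else 0 := by
      intro k hk
      rw [Finset.mem_range] at hk
      rw [hx_some]
      refine if_congr ?_ rfl rfl
      conv_lhs => rw [← hj]
      exact cast_inj_le hm (by omega)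
    rw [Finset.sum_congr rfl hc, Finset.sum_ite_eq]
    simp only [Finset.mem_range]
    have hc1 : (j = ((r-1:ℕ) : ZMod (r+1))) ↔ j.val = r - 1 := by
      conv_lhs => rw [← hj]
      exact cast_inj_le hm (by omega)
    have hc2 : (j = ((r:ℕ) : ZMod (r+1))) ↔ j.val = r := by
      conv_lhs => rw [← hj]
      exact cast_inj_le hm (le_refl r)
    rcases (show j.val < r - 1 ∨ j.val = r - 1 ∨ j.val = r by omega) with hlt | heq | heq
    · rw [if_pos hlt, if_neg (fun hcon => by
        rcases hcon with h' | h'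
        · exact absurd (hc1.mp h') (by omega)
        · exact absurd (hc2.mp h') (by omega))]
      rfl
    · rw [if_neg (by omega), if_pos (Or.inl (hc1.mpr heq))]
      rfl
    · rw [if_neg (by omega), if_pos (Or.inr (hc2.mpr heq))]
      rfl

/-- For even `r ≥ 6`, the set `C = {x_0, x_1, …, x_{r-2}, y_{r-1}, γ}` is a circuit
of `M_{r+1}`. -/
theorem statement8 (r : ℕ) (hr : 6 ≤ r) (hre : Even r)
    (M : Matroid (ZMod (r + 1) ⊕ (ZMod (r + 1) ⊕ Unit)))
    (hM : IsBinRepOn M univ (mWVec r)) :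
    mCircuit M ({e | ∃ k : ℕ, k ≤ r - 2 ∧ e = xe r ((k : ℕ) : ZMod (r + 1))} ∪
      {ye r (((r - 1 : ℕ) : ZMod (r + 1))), ge r}) := by
  obtain ⟨hE, hIndep⟩ := hM
  set S : Set (ZMod (r + 1) ⊕ (ZMod (r + 1) ⊕ Unit)) :=
    ({e | ∃ k : ℕ, k ≤ r - 2 ∧ e = xe r ((k : ℕ) : ZMod (r + 1))} ∪
      {ye r (((r - 1 : ℕ) : ZMod (r + 1))), ge r}) with hS
  have hCsP : ∀ e : ZMod (r + 1) ⊕ (ZMod (r + 1) ⊕ Unit),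
      e ∈ S ↔
      ((∃ k : ℕ, k ≤ r - 2 ∧ e = Sum.inl ((k : ℕ) : ZMod (r + 1))) ∨
        e = Sum.inr (Sum.inl (((r - 1 : ℕ) : ZMod (r + 1)))) ∨ e = Sum.inr (Sum.inr ())) := by
    intro e
    rw [hS]
    simp only [xe, ye, ge, Set.mem_union, Set.mem_insert_iff, Set.mem_setOf_eq,
      Set.mem_singleton_iff]
  set Cfin : Finset (ZMod (r + 1) ⊕ (ZMod (r + 1) ⊕ Unit)) :=
    ((Finset.range (r-1)).image (fun k => Sum.inl ((k:ℕ): ZMod (r+1)))) ∪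
      {Sum.inr (Sum.inl (((r-1:ℕ) : ZMod (r+1)))), Sum.inr (Sum.inr ())} with hCfin
  have hCfinP : ∀ e : ZMod (r + 1) ⊕ (ZMod (r + 1) ⊕ Unit), e ∈ Cfin ↔
      ((∃ k : ℕ, k ≤ r - 2 ∧ e = Sum.inl ((k : ℕ) : ZMod (r + 1))) ∨
        e = Sum.inr (Sum.inl (((r - 1 : ℕ) : ZMod (r + 1)))) ∨ e = Sum.inr (Sum.inr ())) := by
    intro e
    rw [hCfin]
    simp only [Finset.mem_union, Finset.mem_image, Finset.mem_range, Finset.mem_insert,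
      Finset.mem_singleton]
    constructor
    · rintro (⟨k, hk, rfl⟩ | h | h)
      · exact Or.inl ⟨k, by omega, rfl⟩
      · exact Or.inr (Or.inl h)
      · exact Or.inr (Or.inr h)
    · rintro (⟨k, hk, rfl⟩ | h | h)
      · exact Or.inl ⟨k, by omega, rfl⟩
      · exact Or.inr (Or.inl h)
      · exact Or.inr (Or.inr h)
  have hmem : ∀ {e : ZMod (r + 1) ⊕ (ZMod (r + 1) ⊕ Unit)}, e ∈ Cfin → e ∈ S :=
    fun he => (hCsP _).mpr ((hCfinP _).mp he)
  refine ⟨?_, ?_, ?_⟩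
  · rw [hE]; exact subset_univ _
  · rw [hIndep _ (subset_univ _)]
    intro hli
    have hg1 : (Sum.inr (Sum.inr ()) : ZMod (r + 1) ⊕ (ZMod (r + 1) ⊕ Unit)) ∈ Cfin :=
      (hCfinP _).mpr (Or.inr (Or.inr rfl))
    have h2 := linearIndependent_iff'.mp hli
        (Cfin.attach.image (fun e => (⟨e.1, hmem e.2⟩ : ↥S)))
        (fun _ => 1) ?_ ⟨Sum.inr (Sum.inr ()), hmem hg1⟩ ?_
    · exact one_ne_zero h2
    · rw [Finset.sum_image (by
        intro a _ b _ hab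
        exact Subtype.ext (congrArg (fun z : ↥S => z.1) hab))]
      simp only [one_smul]
      rw [Finset.sum_attach Cfin (fun e => mWVec r e), hCfin]
      exact totsum r hr hre
    · rw [Finset.mem_image]
      exact ⟨⟨Sum.inr (Sum.inr ()), hg1⟩, Finset.mem_attach _ _, rfl⟩
  · intro x hx
    rw [hIndep _ (subset_univ _), linearIndependent_iff']
    intro t g hsum i hit
    by_contra hgi
    set u : Finset (ZMod (r + 1) ⊕ (ZMod (r + 1) ⊕ Unit)) :=
      (t.filter (fun i => g i ≠ 0)).image Subtype.val with hu
    have husub : ∀ e ∈ u, e ∈ S ∧ e ≠ x := by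
      intro e he
      rw [hu, Finset.mem_image] at he
      obtain ⟨a, _, rfl⟩ := he
      exact ⟨a.2.1, by simpa using a.2.2⟩
    have hzero : ∑ e ∈ u, mWVec r e = 0 := by
      rw [hu, Finset.sum_image (fun a _ b _ hab => Subtype.ext hab)]
      have hone : ∀ a ∈ t.filter (fun i => g i ≠ 0),
          mWVec r a.1 = g a • (fun z : ↥(S \ {x}) => mWVec r ↑z) a := by
        intro a ha
        rw [Finset.mem_filter] at ha
        have hga : g a = 1 := by
          have hall : ∀ z : ZMod 2, z ≠ 0 → z = 1 := by decide
          exact hall _ ha.2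
        rw [hga, one_smul]
      rw [Finset.sum_congr rfl hone, Finset.sum_filter_of_ne (fun a _ h0 => by
        intro hg0
        apply h0
        rw [hg0, zero_smul])]
      exact hsum
    rcases key_s8 r hr u (fun e he => (hCsP e).mp (husub e he).1) hzero with hemp | hfull
    · have hiu : (i : ZMod (r + 1) ⊕ (ZMod (r + 1) ⊕ Unit)) ∈ u := by
        rw [hu, Finset.mem_image]
        exact ⟨i, Finset.mem_filter.mpr ⟨hit, hgi⟩, rfl⟩
      rw [hemp] at hiu
      exact absurd hiu (Finset.notMem_empty _)
    · have hxu : x ∈ u := hfull x ((hCsP x).mp hx)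
      exact (husub x hxu).2 rfl
end

section
/- Let r ≥ 6 be even and let M_{r+1} be the binary extension of the rank-(r+1) wheel by γ as above. Then the minor M_{r+1}/{y_{r−1}, y_r}\{x_{r−1}, x_0} is isomorphic to M_{r−1}. Equivalently, the dual triadic Möbius matroid Υ_r* is obtained from Υ_{r+2}* by this contraction and deletion. -/
open Set Matroid
open scoped Classical

lemma li_iff {α W : Type*} [Fintype α] [AddCommGroup W] [Module (ZMod 2) W]
    (v : α → W) (s : Set α) :
    LinearIndependent (ZMod 2) (fun x : s => v x) ↔
      ∀ g : α → ZMod 2, (∀ x, x ∉ s → g x = 0) → ∑ x : α, g x • v x = 0 → ∀ x, g x = 0 := by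
  classical
  rw [Fintype.linearIndependent_iff]
  have key : ∀ g : α → ZMod 2, (∀ x, x ∉ s → g x = 0) →
      ∑ x : α, g x • v x = ∑ x : s, g x • v x := by
    intro g hg
    rw [← Finset.sum_subtype (p := fun x => x ∈ s) s.toFinset (fun x => Set.mem_toFinset)
      (fun x => g x • v x)]
    symm
    apply Finset.sum_subset (Finset.subset_univ _)
    intro x _ hx
    rw [hg x (by simpa using hx), zero_smul]
  constructor
  · intro h g hg hsum x
    by_cases hx : x ∈ s
    · exact h (fun y : s => g y) (by rw [← key g hg]; exact hsum) ⟨x, hx⟩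
    · exact hg x hx
  · intro h g' hsum i
    set g : α → ZMod 2 := fun x => if hx : x ∈ s then g' ⟨x, hx⟩ else 0 with hgdef
    have hg : ∀ x, x ∉ s → g x = 0 := fun x hx => dif_neg hx
    have hsum' : ∑ x : α, g x • v x = 0 := by
      rw [key g hg]
      rw [← hsum]
      apply Finset.sum_congr rfl
      intro x _
      simp [hgdef, x.2]
    have := h g hg hsum' i
    simpa [hgdef, i.2] using this

lemma sum_ite_set {α M : Type*} [Fintype α] [AddCommMonoid M] (s : Set α) (F : α → M) :
    ∑ x : α, (if x ∈ s then F x else 0) = ∑ x ∈ s.toFinset, F x := by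
  classical
  rw [← Finset.sum_filter]
  congr 1
  ext x
  simp

lemma core_li {α β W W' : Type*} [Fintype α] [Fintype β]
    [AddCommGroup W] [Module (ZMod 2) W] [AddCommGroup W'] [Module (ZMod 2) W']
    (v : α → W) (w : β → W') (T : W →ₗ[ZMod 2] W') (f : α → β)
    (c₁ c₂ : α) (S I : Set α) (hIS : I ⊆ S)
    (hc₁ : c₁ ∉ S) (hc₂ : c₂ ∉ S) (hcc : c₁ ≠ c₂)
    (hfS : ∀ a ∈ S, T (v a) = w (f a))
    (hinj : Set.InjOn f S)
    (hker : ∀ z, T z = 0 → ∃ a b : ZMod 2, z = a • v c₁ + b • v c₂)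
    (hTc₁ : T (v c₁) = 0) (hTc₂ : T (v c₂) = 0)
    (hpair : ∀ a b : ZMod 2, a • v c₁ + b • v c₂ = 0 → a = 0 ∧ b = 0) :
    LinearIndependent (ZMod 2) (fun x : ↥(I ∪ {c₁, c₂}) => v x) ↔
      LinearIndependent (ZMod 2) (fun y : ↥(f '' I) => w y) := by
  classical
  have hinjI : Set.InjOn f I := hinj.mono hIS
  have hc₁I : c₁ ∉ I := fun h => hc₁ (hIS h)
  have hc₂I : c₂ ∉ I := fun h => hc₂ (hIS h)
  rw [li_iff, li_iff]
  constructor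
  · intro Hbig g hg hsum
    set z : W := ∑ x : α, (if x ∈ I then g (f x) • v x else 0) with hz
    have hTz : T z = 0 := by
      rw [hz, map_sum]
      have h1 : ∀ x : α, T (if x ∈ I then g (f x) • v x else 0)
          = if x ∈ I then g (f x) • w (f x) else 0 := by
        intro x
        by_cases hx : x ∈ I
        · simp [hx, hfS x (hIS hx), map_smul]
        · simp [hx]
      rw [Finset.sum_congr rfl (fun x _ => h1 x), sum_ite_set]
      have h3 : ∑ x ∈ I.toFinset, g (f x) • w (f x)
          = ∑ y ∈ I.toFinset.image f, g y • w y := by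
        rw [Finset.sum_image]
        intro x hx y hy hxy
        exact hinjI (Set.mem_toFinset.1 hx) (Set.mem_toFinset.1 hy) hxy
      rw [h3]
      have himg : ∑ y ∈ I.toFinset.image f, g y • w y = ∑ y : β, g y • w y := by
        apply Finset.sum_subset (Finset.subset_univ _)
        intro y _ hy
        rw [hg y, zero_smul]
        intro hyI
        apply hy
        obtain ⟨x, hxI, rfl⟩ := hyI
        exact Finset.mem_image_of_mem f (Set.mem_toFinset.2 hxI)
      rw [himg]
      exact hsum
    obtain ⟨a, b, hab⟩ := hker z hTz
    set G : α → ZMod 2 := fun x =>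
      (if x ∈ I then g (f x) else 0) + (if x = c₁ then a else 0) + (if x = c₂ then b else 0)
      with hG
    have hGsupp : ∀ x, x ∉ I ∪ {c₁, c₂} → G x = 0 := by
      intro x hx
      simp only [Set.mem_union, Set.mem_insert_iff, Set.mem_singleton_iff, not_or] at hx
      simp [hG, hx.1, hx.2.1, hx.2.2]
    have hGsum : ∑ x : α, G x • v x = 0 := by
      have expand : ∀ x : α, G x • v x =
          (if x ∈ I then g (f x) • v x else 0) + ((if x = c₁ then a • v x else 0)
            + (if x = c₂ then b • v x else 0)) := by
        intro x
        by_cases hxI : x ∈ I <;> by_cases hx1 : x = c₁ <;> by_cases hx2 : x = c₂ <;>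
          simp [hG, hxI, hx1, hx2, add_smul, add_assoc]
      rw [Finset.sum_congr rfl (fun x _ => expand x), Finset.sum_add_distrib,
        Finset.sum_add_distrib, ← hz]
      have e1 : ∑ x : α, (if x = c₁ then a • v x else 0) = a • v c₁ := by
        rw [Finset.sum_ite_eq' Finset.univ c₁ (fun x => a • v x)]
        simp
      have e2 : ∑ x : α, (if x = c₂ then b • v x else 0) = b • v c₂ := by
        rw [Finset.sum_ite_eq' Finset.univ c₂ (fun x => b • v x)]
        simp
      rw [e1, e2, hab]
      have : ((1 : ZMod 2) + 1) = 0 := by decide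
      calc (a • v c₁ + b • v c₂) + (a • v c₁ + b • v c₂)
          = (1 + 1 : ZMod 2) • (a • v c₁ + b • v c₂) := by rw [add_smul, one_smul]
        _ = 0 := by rw [this, zero_smul]
    have hGzero := Hbig G hGsupp hGsum
    intro y
    by_cases hy : y ∈ f '' I
    · obtain ⟨x, hxI, rfl⟩ := hy
      have := hGzero x
      have hx1 : x ≠ c₁ := fun h => hc₁I (h ▸ hxI)
      have hx2 : x ≠ c₂ := fun h => hc₂I (h ▸ hxI)
      simpa [hG, hxI, hx1, hx2] using this
    · exact hg y hy
  · intro Hsmall G hGsupp hGsum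
    set g : β → ZMod 2 := fun y => ∑ x : α, (if x ∈ I ∧ f x = y then G x else 0) with hg
    have hgsupp : ∀ y, y ∉ f '' I → g y = 0 := by
      intro y hy
      rw [hg]
      apply Finset.sum_eq_zero
      intro x _
      rw [if_neg]
      rintro ⟨hxI, rfl⟩
      exact hy ⟨x, hxI, rfl⟩
    have hgsum : ∑ y : β, g y • w y = 0 := by
      have swap : ∑ y : β, g y • w y
          = ∑ x : α, ∑ y : β, (if x ∈ I ∧ f x = y then G x • w y else 0) := by
        rw [Finset.sum_comm]
        apply Finset.sum_congr rfl
        intro y _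
        rw [hg, Finset.sum_smul]
        apply Finset.sum_congr rfl
        intro x _
        split <;> simp
      have inner : ∀ x : α, ∑ y : β, (if x ∈ I ∧ f x = y then G x • w y else 0)
          = if x ∈ I then G x • w (f x) else 0 := by
        intro x
        by_cases hx : x ∈ I
        · simp only [hx, true_and]
          rw [Finset.sum_ite_eq Finset.univ (f x) (fun y => G x • w y)]
          simp
        · simp [hx]
      rw [swap, Finset.sum_congr rfl (fun x _ => inner x)]
      have hT0 : T (∑ x : α, G x • v x) = 0 := by rw [hGsum, map_zero]
      rw [map_sum] at hT0
      have congr2 : ∀ x : α, T (G x • v x) = if x ∈ I then G x • w (f x) else 0 := by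
        intro x
        by_cases hx : x ∈ I
        · simp [hx, map_smul, hfS x (hIS hx)]
        · by_cases hx1 : x = c₁
          · subst hx1; simp [hx, map_smul, hTc₁]
          · by_cases hx2 : x = c₂
            · subst hx2; simp [hx, map_smul, hTc₂]
            · have : G x = 0 := hGsupp x (by simp [hx, hx1, hx2])
              simp [hx, this]
      rw [Finset.sum_congr rfl (fun x _ => congr2 x)] at hT0
      exact hT0
    have hgzero := Hsmall g hgsupp hgsum
    have hGI : ∀ x ∈ I, G x = 0 := by
      intro x hxI
      have h0 : ∑ x' : α, (if x' ∈ I ∧ f x' = f x then G x' else 0) = 0 := hgzero (f x)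
      rw [Finset.sum_eq_single x] at h0
      · simpa [hxI] using h0
      · intro x' _ hne
        rw [if_neg]
        rintro ⟨hx'I, heq⟩
        exact hne (hinjI hx'I hxI heq)
      · intro h; exact absurd (Finset.mem_univ x) h
    have hsum2 : G c₁ • v c₁ + G c₂ • v c₂ = 0 := by
      rw [← hGsum]
      symm
      have expand : ∀ x : α, G x • v x =
          (if x = c₁ then G c₁ • v c₁ else 0) + (if x = c₂ then G c₂ • v c₂ else 0) := by
        intro x
        by_cases hx1 : x = c₁
        · subst hx1; simp [hcc]
        · by_cases hx2 : x = c₂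
          · subst hx2; simp [hx1]
          · by_cases hxI : x ∈ I
            · simp [hx1, hx2, hGI x hxI]
            · have : G x = 0 := hGsupp x (by simp [hxI, hx1, hx2])
              simp [hx1, hx2, this]
      rw [Finset.sum_congr rfl (fun x _ => expand x), Finset.sum_add_distrib]
      rw [Finset.sum_ite_eq' Finset.univ c₁ (fun _ => G c₁ • v c₁),
        Finset.sum_ite_eq' Finset.univ c₂ (fun _ => G c₂ • v c₂)]
      simp
    obtain ⟨h1, h2⟩ := hpair (G c₁) (G c₂) hsum2
    intro x
    by_cases hxI : x ∈ I
    · exact hGI x hxI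
    · by_cases hx1 : x = c₁
      · rw [hx1]; exact h1
      · by_cases hx2 : x = c₂
        · rw [hx2]; exact h2
        · exact hGsupp x (by simp [hxI, hx1, hx2])


lemma li_pair {α W : Type*} [Fintype α] [AddCommGroup W] [Module (ZMod 2) W]
    (v : α → W) (c₁ c₂ : α) (hcc : c₁ ≠ c₂)
    (hpair : ∀ a b : ZMod 2, a • v c₁ + b • v c₂ = 0 → a = 0 ∧ b = 0) :
    LinearIndependent (ZMod 2) (fun x : ({c₁, c₂} : Set α) => v x) := by
  classical
  rw [li_iff]
  intro g hg hsum
  have hexp : ∀ x : α, g x • v x =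
      (if x = c₁ then g c₁ • v c₁ else 0) + (if x = c₂ then g c₂ • v c₂ else 0) := by
    intro x
    by_cases hx1 : x = c₁
    · subst hx1; simp [hcc]
    · by_cases hx2 : x = c₂
      · subst hx2; simp [hx1]
      · simp [hx1, hx2, hg x (by simp [hx1, hx2])]
  rw [Finset.sum_congr rfl (fun x _ => hexp x), Finset.sum_add_distrib,
    Finset.sum_ite_eq' Finset.univ c₁ (fun _ => g c₁ • v c₁),
    Finset.sum_ite_eq' Finset.univ c₂ (fun _ => g c₂ • v c₂)] at hsum
  simp only [Finset.mem_univ, if_true] at hsum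
  obtain ⟨h1, h2⟩ := hpair _ _ hsum
  intro x
  by_cases hx1 : x = c₁
  · rw [hx1]; exact h1
  · by_cases hx2 : x = c₂
    · rw [hx2]; exact h2
    · exact hg x (by simp [hx1, hx2])

lemma mCon_indep_iff {α : Type*} (M : Matroid α) (C I : Set α) (hC : M.Indep C)
    (hCE : C ⊆ M.E) (hI : I ⊆ M.E \ C) :
    (mCon M C).Indep I ↔ M.Indep (I ∪ C) := by
  have hrw : (mCon M C).Indep I ↔ ∃ B, M✶.IsBasis B (M.E \ C) ∧ Disjoint I B := by
    rw [mCon, mDel, Matroid.dual_indep_iff_exists']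
    simp only [Matroid.restrict_ground_eq, Matroid.dual_ground]
    rw [and_iff_right hI]
    constructor
    · rintro ⟨B, hB, hdis⟩
      exact ⟨B, (Matroid.isBase_restrict_iff (M := M✶) (diff_subset)).1 hB, hdis⟩
    · rintro ⟨B, hB, hdis⟩
      exact ⟨B, (Matroid.isBase_restrict_iff (M := M✶) (diff_subset)).2 hB, hdis⟩
  rw [hrw]
  constructor
  · rintro ⟨B, hB, hdis⟩
    -- extend C to a basis J of I ∪ C
    have hIC : I ∪ C ⊆ M.E := union_subset (hI.trans diff_subset) hCE
    obtain ⟨J, hJ, hCJ⟩ := hC.subset_isBasis_of_subset (subset_union_right (s := I)) hIC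
    by_contra hdep
    -- some x ∈ (I ∪ C) \ J
    have hne : ¬ (I ∪ C ⊆ J) := by
      intro hsub
      have heq : I ∪ C = J := hsub.antisymm hJ.subset
      exact hdep (heq ▸ hJ.indep)
    obtain ⟨x, hxIC, hxJ⟩ := not_subset.1 hne
    have hxI : x ∈ I := hxIC.elim id (fun h => absurd (hCJ h) hxJ)
    have hxE : x ∈ M.E := (hI hxI).1
    -- x ∈ M.closure J and J ⊆ E \ (B ∪ {x})
    have hxcl : x ∈ M.closure J := hJ.subset_closure hxIC
    have hJsub : J ⊆ (M.E \ B) \ {x} := by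
      intro y hy
      have hyIC := hJ.subset hy
      refine ⟨⟨hIC hyIC, ?_⟩, ?_⟩
      · intro hyB
        rcases hyIC with h | h
        · exact (hdis.ne_of_mem h hyB) rfl
        · exact (hB.subset hyB).2 h
      · rintro rfl; exact hxJ hy
    have hxcl2 : x ∈ M.closure ((M.E \ B) \ {x}) :=
      M.closure_subset_closure hJsub hxcl
    -- hence E \ (B ∪ {x}) is spanning, giving a base avoiding insert x B
    have hBco : M.Coindep B := Matroid.coindep_def.2 hB.indep
    have hsp : M.Spanning (M.E \ B) := hBco.compl_spanning
    have hsp2 : M.Spanning ((M.E \ B) \ {x}) := by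
      rw [Matroid.spanning_iff_closure_eq (diff_subset.trans diff_subset)]
      rw [Matroid.closure_diff_singleton_eq_closure hxcl2]
      exact hsp.closure_eq
    obtain ⟨B₀, hB₀, hB₀sub⟩ := hsp2.exists_isBase_subset
    -- insert x B is M✶-indep
    have hxB : x ∉ B := fun h => hdis.ne_of_mem hxI h rfl
    have hins : M✶.Indep (insert x B) := by
      rw [Matroid.dual_indep_iff_exists (insert_subset hxE hB.indep.subset_ground)]
      refine ⟨B₀, hB₀, ?_⟩
      rw [Set.disjoint_left]
      intro y hy1 hy2
      have := hB₀sub hy2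
      rcases hy1 with rfl | hy1
      · exact this.2 rfl
      · exact this.1.2 hy1
    -- contradicts maximality of B in E \ C
    have : B = insert x B := hB.eq_of_subset_indep hins (subset_insert _ _)
      (insert_subset (hI hxI) hB.subset)
    exact hxB (by rw [this]; exact mem_insert _ _)
  · intro hind
    obtain ⟨B₀, hB₀, hsub⟩ := hind.exists_isBase_superset
    refine ⟨M.E \ B₀, ?_, ?_⟩
    · have hbd : M✶.IsBase (M.E \ B₀) := hB₀.compl_isBase_dual
      rw [Matroid.isBasis_iff (M := M✶) (show M.E \ C ⊆ M✶.E from diff_subset)]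
      refine ⟨hbd.indep, ?_, fun J hJ hBJ _ => hbd.eq_of_subset_indep hJ hBJ⟩
      intro y hy
      exact ⟨hy.1, fun hyC => hy.2 (hsub (Or.inr hyC))⟩
    · exact disjoint_sdiff_right.mono_left (hsub.trans' subset_union_left)

lemma minor_indep_iff {α : Type*} (M : Matroid α) (C D I : Set α) (hC : M.Indep C)
    (hI : I ⊆ M.E \ (C ∪ D)) :
    (mDel (mCon M C) D).Indep I ↔ M.Indep (I ∪ C) := by
  have hCE : C ⊆ M.E := hC.subset_ground
  have hE : (mCon M C).E = M.E \ C := rfl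
  rw [mDel, Matroid.restrict_indep_iff]
  have hI' : I ⊆ M.E \ C := hI.trans (diff_subset_diff_right subset_union_left)
  rw [mCon_indep_iff M C I hC hCE hI']
  simp only [hE]
  constructor
  · exact fun h => h.1
  · intro h
    refine ⟨h, fun y hy => ?_⟩
    exact ⟨⟨(hI hy).1, fun h2 => (hI hy).2 (Or.inl h2)⟩, fun h2 => (hI hy).2 (Or.inr h2)⟩

-- helpers
lemma incVec_apply {V : Type*} (x y u : V) :
    incVec s(x, y) u = if u = x ∨ u = y then 1 else 0 := by
  unfold incVec
  simp [Sym2.mem_iff]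

lemma eq_cast_iff_val {n : ℕ} [NeZero n] (i : ZMod n) (a : ℕ) (ha : a < n) :
    i = (a : ZMod n) ↔ i.val = a := by
  constructor
  · rintro rfl; exact ZMod.val_cast_of_lt ha
  · intro h
    have h2 : ((i.val : ℕ) : ZMod n) = i := ZMod.natCast_rightInverse i
    rw [← h2, h]

lemma cast_eq_cast_iff {n : ℕ} [NeZero n] (a b : ℕ) (ha : a < n) (hb : b < n) :
    ((a : ZMod n) = (b : ZMod n)) ↔ a = b := by
  rw [eq_cast_iff_val _ b hb, ZMod.val_cast_of_lt ha]

/-- The vertex map contracting rim vertices `r-1, r, 0` to `0`. -/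
def pmap (r : ℕ) (i : ZMod (r + 1)) : ZMod (r - 2 + 1) :=
  if i.val = r ∨ i.val = r - 1 then 0 else (i.val : ZMod (r - 2 + 1))

/-- The element bijection from the minor's ground set to the small ground set. -/
def fmap (r : ℕ) : (ZMod (r + 1) ⊕ (ZMod (r + 1) ⊕ Unit)) →
    (ZMod (r - 2 + 1) ⊕ (ZMod (r - 2 + 1) ⊕ Unit)) :=
  Sum.map (pmap r) (Sum.map (pmap r) id)

/-- Inverse of `fmap` on the minor's ground set. -/
def finvmap (r : ℕ) : (ZMod (r - 2 + 1) ⊕ (ZMod (r - 2 + 1) ⊕ Unit)) →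
    (ZMod (r + 1) ⊕ (ZMod (r + 1) ⊕ Unit)) :=
  Sum.map (fun j => if j = 0 then ((r : ℕ) : ZMod (r + 1)) else ((j.val : ℕ) : ZMod (r + 1)))
    (Sum.map (fun j => ((j.val : ℕ) : ZMod (r + 1))) id)

/-- The contraction linear map. -/
noncomputable def Tlin (r : ℕ) :
    (Option (ZMod (r + 1)) → ZMod 2) →ₗ[ZMod 2] (Option (ZMod (r - 2 + 1)) → ZMod 2) where
  toFun z w :=
    match w with
    | none => z none
    | some j => z (some ((j.val : ℕ) : ZMod (r + 1))) +
        (if j = 0 then z (some (((r - 1 : ℕ) : ZMod (r + 1)))) +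
          z (some (((r : ℕ) : ZMod (r + 1)))) else 0)
  map_add' z₁ z₂ := by
    funext w
    cases w with
    | none => rfl
    | some j =>
      simp only [Pi.add_apply]
      split <;> ring
  map_smul' c z := by
    funext w
    cases w with
    | none => rfl
    | some j =>
      simp only [Pi.smul_apply, smul_eq_mul, RingHom.id_apply]
      split <;> ring

lemma Tlin_apply_none (r : ℕ) (z : Option (ZMod (r + 1)) → ZMod 2) :
    Tlin r z none = z none := rfl

lemma Tlin_apply_some (r : ℕ) (z : Option (ZMod (r + 1)) → ZMod 2) (j : ZMod (r - 2 + 1)) :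
    Tlin r z (some j) = z (some ((j.val : ℕ) : ZMod (r + 1))) +
        (if j = 0 then z (some (((r - 1 : ℕ) : ZMod (r + 1)))) +
          z (some (((r : ℕ) : ZMod (r + 1)))) else 0) := rfl

lemma two_eq_zero : (1 + 1 : ZMod 2) = 0 := by decide

lemma vc1_eq (r : ℕ) (hr : 6 ≤ r) : mWVec r (ye r ((r - 1 : ℕ))) =
    incVec s((some (((r-1:ℕ) : ZMod (r+1))) : Option (ZMod (r+1))), some (((r:ℕ) : ZMod (r+1)))) := by
  show incVec s(some (((r-1:ℕ) : ZMod (r+1))), some ((((r-1:ℕ) : ZMod (r+1))) + 1)) = _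
  have h : (((r-1:ℕ) : ZMod (r+1))) + 1 = (((r-1)+1 : ℕ) : ZMod (r+1)) := by push_cast; ring
  rw [h, show r - 1 + 1 = r from by omega]

lemma vc2_eq (r : ℕ) (hr : 6 ≤ r) : mWVec r (ye r ((r : ℕ))) =
    incVec s((some (((r:ℕ) : ZMod (r+1))) : Option (ZMod (r+1))), some (0 : ZMod (r+1))) := by
  show incVec s(some (((r:ℕ) : ZMod (r+1))), some ((((r:ℕ) : ZMod (r+1))) + 1)) = _
  have h : (((r:ℕ) : ZMod (r+1))) + 1 = ((r+1 : ℕ) : ZMod (r+1)) := by push_cast; ring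
  rw [h, ZMod.natCast_self]

lemma Tc1 (r : ℕ) (hr : 6 ≤ r) :
    Tlin r (incVec s((some (((r-1:ℕ) : ZMod (r+1))) : Option (ZMod (r+1))),
      some (((r:ℕ) : ZMod (r+1))))) = 0 := by
  funext w
  cases w with
  | none =>
    rw [Tlin_apply_none, incVec_apply]
    simp
  | some j =>
    have hjlt : j.val < r - 2 + 1 := ZMod.val_lt j
    rw [Tlin_apply_some, incVec_apply, incVec_apply, incVec_apply]
    have hne1 : ((j.val : ℕ) : ZMod (r+1)) ≠ ((r-1:ℕ) : ZMod (r+1)) := by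
      rw [Ne, cast_eq_cast_iff _ _ (by omega) (by omega)]; omega
    have hne2 : ((j.val : ℕ) : ZMod (r+1)) ≠ ((r:ℕ) : ZMod (r+1)) := by
      rw [Ne, cast_eq_cast_iff _ _ (by omega) (by omega)]; omega
    simp only [Option.some.injEq, hne1, hne2, or_self, if_false, false_or, Pi.zero_apply]
    split
    · simp [two_eq_zero]
    · simp

lemma Tc2 (r : ℕ) (hr : 6 ≤ r) :
    Tlin r (incVec s((some (((r:ℕ) : ZMod (r+1))) : Option (ZMod (r+1))),
      some (0 : ZMod (r+1)))) = 0 := by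
  funext w
  cases w with
  | none =>
    rw [Tlin_apply_none, incVec_apply]
    simp
  | some j =>
    have hjlt : j.val < r - 2 + 1 := ZMod.val_lt j
    rw [Tlin_apply_some, incVec_apply, incVec_apply, incVec_apply]
    have hne2 : ((j.val : ℕ) : ZMod (r+1)) ≠ ((r:ℕ) : ZMod (r+1)) := by
      rw [Ne, cast_eq_cast_iff _ _ (by omega) (by omega)]; omega
    have hne3 : ((r-1:ℕ) : ZMod (r+1)) ≠ ((r:ℕ) : ZMod (r+1)) := by
      rw [Ne, cast_eq_cast_iff _ _ (by omega) (by omega)]; omega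
    have hne4 : ((r-1:ℕ) : ZMod (r+1)) ≠ (0 : ZMod (r+1)) := by
      rw [Ne, show (0 : ZMod (r+1)) = ((0:ℕ) : ZMod (r+1)) from by norm_num,
        cast_eq_cast_iff _ _ (by omega) (by omega)]; omega
    by_cases hj : j = 0
    · have hjv : j.val = 0 := by rw [hj, ZMod.val_zero]
      simp only [hj, if_pos rfl, Option.some.injEq, hjv, Nat.cast_zero, hne2, hne3, hne4]
      simp [two_eq_zero, hne3.symm ∘ Eq.symm]
    · have hjv : j.val ≠ 0 := fun h => hj ((ZMod.val_eq_zero j).1 h)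
      have hne0 : ((j.val : ℕ) : ZMod (r+1)) ≠ (0 : ZMod (r+1)) := by
        rw [Ne, show (0 : ZMod (r+1)) = ((0:ℕ) : ZMod (r+1)) from by norm_num,
          cast_eq_cast_iff _ _ (by omega) (by omega)]; omega
      rw [if_neg hj, add_zero, if_neg]
      · rfl
      · push_neg
        exact ⟨fun h => hne2 (Option.some.inj h), fun h => hne0 (Option.some.inj h)⟩

lemma zmod2_rel : ∀ x y t : ZMod 2, x + (y + t) = 0 → t = y + x := by decide

lemma Tker (r : ℕ) (hr : 6 ≤ r) (z : Option (ZMod (r + 1)) → ZMod 2)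
    (hz : Tlin r z = 0) :
    ∃ a b : ZMod 2, z = a • incVec s((some (((r-1:ℕ) : ZMod (r+1))) : Option (ZMod (r+1))),
        some (((r:ℕ) : ZMod (r+1))))
      + b • incVec s((some (((r:ℕ) : ZMod (r+1))) : Option (ZMod (r+1))), some (0 : ZMod (r+1))) := by
  have hnone : z none = 0 := congrFun hz none
  have hgen : ∀ i : ZMod (r+1), i.val ≠ 0 → i.val ≠ r - 1 → i.val ≠ r → z (some i) = 0 := by
    intro i h0 h1 h2
    have hival : i.val < r + 1 := ZMod.val_lt i
    have hjv : ((i.val : ℕ) : ZMod (r - 2 + 1)).val = i.val := ZMod.val_cast_of_lt (by omega)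
    have hj0 : ((i.val : ℕ) : ZMod (r - 2 + 1)) ≠ 0 := by
      rw [Ne, ← ZMod.val_eq_zero, hjv]; exact h0
    have h := congrFun hz (some ((i.val : ℕ) : ZMod (r - 2 + 1)))
    rw [Tlin_apply_some, if_neg hj0, add_zero, hjv, ZMod.natCast_rightInverse i] at h
    simpa using h
  have hrel := congrFun hz (some (0 : ZMod (r - 2 + 1)))
  rw [Tlin_apply_some, if_pos rfl, ZMod.val_zero, Nat.cast_zero] at hrel
  simp only [Pi.zero_apply] at hrel
  refine ⟨z (some (((r-1:ℕ) : ZMod (r+1)))), z (some (0 : ZMod (r+1))), ?_⟩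
  funext u
  cases u with
  | none =>
    rw [Pi.add_apply, Pi.smul_apply, Pi.smul_apply, incVec_apply, incVec_apply]
    simp [hnone]
  | some i =>
    have hival : i.val < r + 1 := ZMod.val_lt i
    rw [Pi.add_apply, Pi.smul_apply, Pi.smul_apply, incVec_apply, incVec_apply]
    have e1 : (some i = some (((r-1:ℕ) : ZMod (r+1)))) ↔ i.val = r - 1 := by
      rw [Option.some.injEq, eq_cast_iff_val _ _ (by omega)]
    have e2 : (some i = some (((r:ℕ) : ZMod (r+1)))) ↔ i.val = r := by
      rw [Option.some.injEq, eq_cast_iff_val _ _ (by omega)]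
    have e3 : (some i = some (0 : ZMod (r+1))) ↔ i.val = 0 := by
      rw [Option.some.injEq]
      constructor
      · rintro rfl; exact ZMod.val_zero
      · intro h; exact (ZMod.val_eq_zero i).1 h
    simp only [e1, e2, e3]
    by_cases h0 : i.val = 0
    · rw [if_neg (by omega), if_pos (by omega), (ZMod.val_eq_zero i).1 h0]
      simp
    · by_cases h1 : i.val = r - 1
      · have hi : i = ((r - 1 : ℕ) : ZMod (r+1)) := (eq_cast_iff_val _ _ (by omega)).2 h1
        rw [if_pos (by omega), if_neg (by omega), hi]
        simp
      · by_cases h2 : i.val = r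
        · have hi : i = ((r : ℕ) : ZMod (r+1)) := (eq_cast_iff_val _ _ (by omega)).2 h2
          rw [if_pos (by omega), if_pos (by omega), hi, zmod2_rel _ _ _ hrel]
          simp [add_comm]
        · rw [if_neg (by omega), if_neg (by omega), hgen i h0 h1 h2]
          simp

lemma Tpair (r : ℕ) (hr : 6 ≤ r) (a b : ZMod 2)
    (h : a • incVec s((some (((r-1:ℕ) : ZMod (r+1))) : Option (ZMod (r+1))),
        some (((r:ℕ) : ZMod (r+1))))
      + b • incVec s((some (((r:ℕ) : ZMod (r+1))) : Option (ZMod (r+1))), some (0 : ZMod (r+1)))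
      = 0) : a = 0 ∧ b = 0 := by
  have hne3 : ((r-1:ℕ) : ZMod (r+1)) ≠ ((r:ℕ) : ZMod (r+1)) := by
    rw [Ne, cast_eq_cast_iff _ _ (by omega) (by omega)]; omega
  have hne4 : ((r-1:ℕ) : ZMod (r+1)) ≠ (0 : ZMod (r+1)) := by
    rw [Ne, show (0 : ZMod (r+1)) = ((0:ℕ) : ZMod (r+1)) from by norm_num,
      cast_eq_cast_iff _ _ (by omega) (by omega)]; omega
  have hne5 : (0 : ZMod (r+1)) ≠ ((r:ℕ) : ZMod (r+1)) := by
    rw [Ne, show (0 : ZMod (r+1)) = ((0:ℕ) : ZMod (r+1)) from by norm_num,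
      cast_eq_cast_iff _ _ (by omega) (by omega)]; omega
  constructor
  · have := congrFun h (some (((r-1:ℕ) : ZMod (r+1))))
    rw [Pi.add_apply, Pi.smul_apply, Pi.smul_apply, incVec_apply, incVec_apply] at this
    rw [if_pos (Or.inl rfl), if_neg (by
      push_neg
      exact ⟨fun hh => hne3 (Option.some.inj hh), fun hh => hne4 (Option.some.inj hh)⟩)] at this
    simpa using this
  · have := congrFun h (some (0 : ZMod (r+1)))
    rw [Pi.add_apply, Pi.smul_apply, Pi.smul_apply, incVec_apply, incVec_apply] at this
    rw [if_neg (by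
      push_neg
      exact ⟨fun hh => hne4 (Option.some.inj hh).symm, fun hh => hne5 (Option.some.inj hh)⟩),
      if_pos (Or.inr rfl)] at this
    simpa using this

lemma cast_eq_iff_val {n : ℕ} [NeZero n] (a : ℕ) (i : ZMod n) (ha : a < n) :
    ((a : ZMod n) = i) ↔ i.val = a := by
  rw [eq_comm, eq_cast_iff_val _ _ ha]

lemma mWVec_ge_eq (m : ℕ) (hm : Even m) : mWVec m (ge m) = fun _ => 1 := by
  show (∑ i : ZMod (m+1), incVec s((none : Option (ZMod (m+1))), some i)) = _
  funext u
  rw [Finset.sum_apply]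
  cases u with
  | none =>
    have h1 : ∀ i : ZMod (m+1), incVec s((none : Option (ZMod (m+1))), some i) none = 1 := by
      intro i; rw [incVec_apply]; simp
    rw [Finset.sum_congr rfl (fun i _ => h1 i), Finset.sum_const, Finset.card_univ, ZMod.card]
    have : ((m + 1 : ℕ) : ZMod 2) = 1 := by
      rw [← ZMod.natCast_mod, show (m+1) % 2 = 1 from by
        obtain ⟨k, rfl⟩ := hm; omega, Nat.cast_one]
    rw [nsmul_eq_mul, mul_one]
    exact_mod_cast this
  | some k =>
    have h1 : ∀ i : ZMod (m+1), incVec s((none : Option (ZMod (m+1))), some i) (some k)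
        = if k = i then 1 else 0 := by
      intro i; rw [incVec_apply]; simp
    rw [Finset.sum_congr rfl (fun i _ => h1 i), Finset.sum_ite_eq]
    simp

lemma Tlin_one (r : ℕ) : Tlin r (fun _ => (1 : ZMod 2)) = fun _ => 1 := by
  funext w
  cases w with
  | none => rfl
  | some j =>
    rw [Tlin_apply_some]
    split <;> simp [two_eq_zero]

lemma even_sub_two' {r : ℕ} (hr : 6 ≤ r) (hre : Even r) : Even (r - 2) := by
  obtain ⟨k, rfl⟩ := hre; exact ⟨k - 1, by omega⟩

lemma Timg_ge (r : ℕ) (hr : 6 ≤ r) (hre : Even r) :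
    Tlin r (mWVec r (ge r)) = mWVec (r - 2) (ge (r - 2)) := by
  rw [mWVec_ge_eq r hre, mWVec_ge_eq (r-2) (even_sub_two' hr hre), Tlin_one]

lemma Timg_xe (r : ℕ) (hr : 6 ≤ r) (i : ZMod (r+1)) (h0 : i.val ≠ 0) (h1 : i.val ≠ r - 1) :
    Tlin r (mWVec r (xe r i)) = mWVec (r - 2) (xe (r - 2) (pmap r i)) := by
  have hival : i.val < r + 1 := ZMod.val_lt i
  show Tlin r (incVec s(none, some i)) = incVec s(none, some (pmap r i))
  funext w
  cases w with
  | none =>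
    rw [Tlin_apply_none, incVec_apply, incVec_apply]
    simp
  | some j =>
    have hjlt : j.val < r - 2 + 1 := ZMod.val_lt j
    rw [Tlin_apply_some]
    simp only [incVec_apply, Option.some.injEq, reduceCtorEq, false_or]
    have c1 : (((j.val : ℕ) : ZMod (r+1)) = i) ↔ i.val = j.val := cast_eq_iff_val _ _ (by omega)
    have c2 : (((r - 1 : ℕ) : ZMod (r+1)) = i) ↔ i.val = r - 1 := cast_eq_iff_val _ _ (by omega)
    have c3 : (((r : ℕ) : ZMod (r+1)) = i) ↔ i.val = r := cast_eq_iff_val _ _ (by omega)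
    simp only [c1, c2, c3]
    by_cases hir : i.val = r
    · simp only [pmap, hir]
      simp [(show ¬ (r : ℕ) = j.val from by omega), (show ¬ (r : ℕ) = r - 1 from by omega)]
    · have hle : i.val ≤ r - 2 := by omega
      have c4 : (j = ((i.val : ℕ) : ZMod (r - 2 + 1))) ↔ j.val = i.val :=
        eq_cast_iff_val _ _ (by omega)
      by_cases hji : j.val = i.val
      · simp [pmap, (show ¬ (i.val = r ∨ i.val = r - 1) from by omega), c4, hji, h1, hir,
          -ZMod.natCast_val]
      · simp [pmap, (show ¬ (i.val = r ∨ i.val = r - 1) from by omega), c4, hji, h1, hir,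
          (show ¬ i.val = j.val from fun h => hji h.symm), -ZMod.natCast_val]

lemma Timg_ye (r : ℕ) (hr : 6 ≤ r) (i : ZMod (r+1)) (h1 : i.val ≠ r - 1) (h2 : i.val ≠ r) :
    Tlin r (mWVec r (ye r i)) = mWVec (r - 2) (ye (r - 2) (pmap r i)) := by
  have hival : i.val < r + 1 := ZMod.val_lt i
  have hile : i.val ≤ r - 2 := by omega
  have hi1 : i + 1 = ((i.val + 1 : ℕ) : ZMod (r+1)) := by
    conv_lhs => rw [← ZMod.natCast_rightInverse i]
    push_cast
    ring
  have hpm : pmap r i = ((i.val : ℕ) : ZMod (r - 2 + 1)) := by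
    rw [pmap, if_neg (by omega)]
  have hs1 : ((i.val : ℕ) : ZMod (r - 2 + 1)) + 1 = ((i.val + 1 : ℕ) : ZMod (r - 2 + 1)) := by
    push_cast
    ring
  show Tlin r (incVec s(some i, some (i+1))) = incVec s(some (pmap r i), some (pmap r i + 1))
  rw [hi1, hpm, hs1]
  funext w
  cases w with
  | none =>
    rw [Tlin_apply_none, incVec_apply, incVec_apply]
    simp
  | some j =>
    have hjlt : j.val < r - 2 + 1 := ZMod.val_lt j
    rw [Tlin_apply_some]
    simp only [incVec_apply, Option.some.injEq, reduceCtorEq, false_or]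
    have cA : (((j.val : ℕ) : ZMod (r+1)) = i) ↔ i.val = j.val := cast_eq_iff_val _ _ (by omega)
    have cB : (((j.val : ℕ) : ZMod (r+1)) = ((i.val + 1 : ℕ) : ZMod (r+1))) ↔ j.val = i.val + 1 :=
      cast_eq_cast_iff _ _ (by omega) (by omega)
    have cC : (((r - 1 : ℕ) : ZMod (r+1)) = i) ↔ i.val = r - 1 := cast_eq_iff_val _ _ (by omega)
    have cD : (((r - 1 : ℕ) : ZMod (r+1)) = ((i.val + 1 : ℕ) : ZMod (r+1))) ↔ r - 1 = i.val + 1 :=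
      cast_eq_cast_iff _ _ (by omega) (by omega)
    have cE : (((r : ℕ) : ZMod (r+1)) = i) ↔ i.val = r := cast_eq_iff_val _ _ (by omega)
    have cF : (((r : ℕ) : ZMod (r+1)) = ((i.val + 1 : ℕ) : ZMod (r+1))) ↔ r = i.val + 1 :=
      cast_eq_cast_iff _ _ (by omega) (by omega)
    have cG : (j = ((i.val : ℕ) : ZMod (r - 2 + 1))) ↔ j.val = i.val :=
      eq_cast_iff_val _ _ (by omega)
    have cJ : (j = 0) ↔ j.val = 0 := (ZMod.val_eq_zero j).symm
    by_cases hend : i.val = r - 2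
    · have cH : ((i.val + 1 : ℕ) : ZMod (r - 2 + 1)) = 0 := by
        rw [show i.val + 1 = r - 2 + 1 from by omega]
        exact ZMod.natCast_self _
      rw [cH]
      have cH2 : (j = (0 : ZMod (r - 2 + 1))) ↔ j.val = 0 := cJ
      simp only [cA, cB, cC, cD, cE, cF, cG, cJ, cH2]
      split_ifs <;> first | decide | omega
    · have cH : (j = ((i.val + 1 : ℕ) : ZMod (r - 2 + 1))) ↔ j.val = i.val + 1 :=
        eq_cast_iff_val _ _ (by omega)
      simp only [cA, cB, cC, cD, cE, cF, cG, cJ, cH]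
      split_ifs <;> first | decide | omega

def Sset (r : ℕ) : Set (ZMod (r + 1) ⊕ (ZMod (r + 1) ⊕ Unit)) :=
  (univ \ {ye r (((r - 1 : ℕ) : ZMod (r + 1))), ye r (((r : ℕ) : ZMod (r + 1)))}) \
    {xe r (((r - 1 : ℕ) : ZMod (r + 1))), xe r 0}

lemma mem_Sset_inl (r : ℕ) (hr : 6 ≤ r) (i : ZMod (r + 1)) :
    Sum.inl i ∈ Sset r ↔ (i.val ≠ r - 1 ∧ i.val ≠ 0) := by
  have e1 : (i = ((r - 1 : ℕ) : ZMod (r+1))) ↔ i.val = r - 1 := eq_cast_iff_val _ _ (by omega)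
  have e2 : (i = 0) ↔ i.val = 0 := (ZMod.val_eq_zero i).symm
  simp [Sset, xe, ye, e1, e2, -ZMod.val_eq_zero]

lemma mem_Sset_inr (r : ℕ) (hr : 6 ≤ r) (i : ZMod (r + 1)) :
    Sum.inr (Sum.inl i) ∈ Sset r ↔ (i.val ≠ r - 1 ∧ i.val ≠ r) := by
  have e1 : (i = ((r - 1 : ℕ) : ZMod (r+1))) ↔ i.val = r - 1 := eq_cast_iff_val _ _ (by omega)
  have e2 : (i = ((r : ℕ) : ZMod (r+1))) ↔ i.val = r := eq_cast_iff_val _ _ (by omega)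
  simp [Sset, xe, ye, e1, e2, -ZMod.val_eq_zero]

lemma mem_Sset_ge (r : ℕ) : ge r ∈ Sset r := by
  show Sum.inr (Sum.inr ()) ∈ Sset r
  simp [Sset, xe, ye]

lemma Timg_all (r : ℕ) (hr : 6 ≤ r) (hre : Even r) (a : ZMod (r + 1) ⊕ (ZMod (r + 1) ⊕ Unit))
    (ha : a ∈ Sset r) : Tlin r (mWVec r a) = mWVec (r - 2) (fmap r a) := by
  rcases a with i | i | u
  · obtain ⟨hn1, hn0⟩ := (mem_Sset_inl r hr i).1 ha
    exact Timg_xe r hr i hn0 hn1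
  · obtain ⟨hn1, hn2⟩ := (mem_Sset_inr r hr i).1 ha
    exact Timg_ye r hr i hn1 hn2
  · exact Timg_ge r hr hre

lemma fmap_finv (r : ℕ) (hr : 6 ≤ r) (b : ZMod (r - 2 + 1) ⊕ (ZMod (r - 2 + 1) ⊕ Unit)) :
    fmap r (finvmap r b) = b := by
  rcases b with j | j | u
  · show Sum.inl (pmap r (if j = 0 then ((r : ℕ) : ZMod (r + 1)) else ((j.val : ℕ) : ZMod (r + 1)))) = Sum.inl j
    congr 1
    by_cases hj : j = 0
    · rw [if_pos hj, pmap, if_pos (Or.inl (ZMod.val_cast_of_lt (by omega))), hj]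
    · have hjv : j.val ≠ 0 := fun h => hj ((ZMod.val_eq_zero j).1 h)
      have hjlt : j.val < r - 2 + 1 := ZMod.val_lt j
      rw [if_neg hj, pmap, if_neg (by rw [ZMod.val_cast_of_lt (by omega)]; omega),
        ZMod.val_cast_of_lt (by omega), ZMod.natCast_rightInverse j]
  · show Sum.inr (Sum.inl (pmap r ((j.val : ℕ) : ZMod (r + 1)))) = _
    have hjlt : j.val < r - 2 + 1 := ZMod.val_lt j
    rw [pmap, if_neg (by rw [ZMod.val_cast_of_lt (by omega)]; omega),
      ZMod.val_cast_of_lt (by omega), ZMod.natCast_rightInverse j]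
  · rfl

lemma finv_fmap (r : ℕ) (hr : 6 ≤ r) (a : ZMod (r + 1) ⊕ (ZMod (r + 1) ⊕ Unit))
    (ha : a ∈ Sset r) : finvmap r (fmap r a) = a := by
  have hmax : ∀ i : ZMod (r + 1), i.val < r + 1 := fun i => ZMod.val_lt i
  rcases a with i | i | u
  · obtain ⟨hn1, hn0⟩ := (mem_Sset_inl r hr i).1 ha
    show Sum.inl (if pmap r i = 0 then ((r : ℕ) : ZMod (r + 1))
      else (((pmap r i).val : ℕ) : ZMod (r + 1))) = Sum.inl i
    congr 1
    by_cases hir : i.val = r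
    · rw [pmap, if_pos (Or.inl hir), if_pos rfl, eq_comm, eq_cast_iff_val _ _ (by omega)]
      exact hir
    · have hile : i.val ≤ r - 2 := by have := hmax i; omega
      have hc0 : ((i.val : ℕ) : ZMod (r - 2 + 1)) ≠ 0 := by
        rw [Ne, ← ZMod.val_eq_zero, ZMod.val_cast_of_lt (by omega)]
        omega
      rw [pmap, if_neg (show ¬ (i.val = r ∨ i.val = r - 1) from by omega), if_neg hc0,
        ZMod.val_cast_of_lt (by omega), ZMod.natCast_rightInverse i]
  · obtain ⟨hn1, hn2⟩ := (mem_Sset_inr r hr i).1 ha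
    have hile : i.val ≤ r - 2 := by have := hmax i; omega
    show Sum.inr (Sum.inl (((pmap r i).val : ℕ) : ZMod (r + 1))) = _
    rw [pmap, if_neg (by omega), ZMod.val_cast_of_lt (by omega),
      ZMod.natCast_rightInverse i]
  · rfl

lemma finv_mem (r : ℕ) (hr : 6 ≤ r) (b : ZMod (r - 2 + 1) ⊕ (ZMod (r - 2 + 1) ⊕ Unit)) :
    finvmap r b ∈ Sset r := by
  rcases b with j | j | u
  · show Sum.inl (if j = 0 then ((r : ℕ) : ZMod (r + 1)) else ((j.val : ℕ) : ZMod (r + 1))) ∈ _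
    rw [mem_Sset_inl r hr]
    by_cases hj : j = 0
    · rw [if_pos hj, ZMod.val_cast_of_lt (by omega)]
      omega
    · have hjv : j.val ≠ 0 := fun h => hj ((ZMod.val_eq_zero j).1 h)
      have hjlt : j.val < r - 2 + 1 := ZMod.val_lt j
      rw [if_neg hj, ZMod.val_cast_of_lt (by omega)]
      omega
  · show Sum.inr (Sum.inl ((j.val : ℕ) : ZMod (r + 1))) ∈ _
    have hjlt : j.val < r - 2 + 1 := ZMod.val_lt j
    rw [mem_Sset_inr r hr, ZMod.val_cast_of_lt (by omega)]
    omega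
  · exact mem_Sset_ge r


/-- For even `r ≥ 6`, the minor `M_{r+1} / {y_{r-1}, y_r} \ {x_{r-1}, x_0}` is isomorphic
to `M_{r-1}`; equivalently (by duality), `Υ_r^*` is obtained from `Υ_{r+2}^*` by this
contraction and deletion. -/
theorem statement10 (r : ℕ) (hr : 6 ≤ r) (hre : Even r)
    (M : Matroid (ZMod (r + 1) ⊕ (ZMod (r + 1) ⊕ Unit)))
    (hM : IsBinRepOn M univ (mWVec r))
    (N : Matroid (ZMod (r - 2 + 1) ⊕ (ZMod (r - 2 + 1) ⊕ Unit)))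
    (hN : IsBinRepOn N univ (mWVec (r - 2))) :
    MatroidIso
      (mDel (mCon M {ye r (((r - 1 : ℕ) : ZMod (r + 1))), ye r (((r : ℕ) : ZMod (r + 1)))})
        {xe r (((r - 1 : ℕ) : ZMod (r + 1))), xe r 0}) N := by
  classical
  obtain ⟨hME, hMI⟩ := hM
  obtain ⟨hNE, hNI⟩ := hN
  set C : Set (ZMod (r + 1) ⊕ (ZMod (r + 1) ⊕ Unit)) :=
    {ye r (((r - 1 : ℕ) : ZMod (r + 1))), ye r (((r : ℕ) : ZMod (r + 1)))} with hC
  set D : Set (ZMod (r + 1) ⊕ (ZMod (r + 1) ⊕ Unit)) :=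
    {xe r (((r - 1 : ℕ) : ZMod (r + 1))), xe r 0} with hD
  have hcc : ye r (((r - 1 : ℕ) : ZMod (r + 1))) ≠ ye r (((r : ℕ) : ZMod (r + 1))) := by
    intro h
    have h2 : ((r - 1 : ℕ) : ZMod (r + 1)) = ((r : ℕ) : ZMod (r + 1)) := by
      simpa [ye] using h
    rw [cast_eq_cast_iff _ _ (by omega) (by omega)] at h2
    omega
  have hCind : M.Indep C := by
    rw [hC, hMI _ (subset_univ _)]
    apply li_pair _ _ _ hcc
    intro a b h
    apply Tpair r hr a b
    rwa [vc1_eq r hr, vc2_eq r hr] at h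
  have hgr : (mDel (mCon M C) D).E = Sset r := by
    show (M.E \ C) \ D = Sset r
    rw [hME]
    rfl
  have hc1S : ye r (((r - 1 : ℕ) : ZMod (r + 1))) ∉ Sset r := fun h => h.1.2 (mem_insert _ _)
  have hc2S : ye r (((r : ℕ) : ZMod (r + 1))) ∉ Sset r :=
    fun h => h.1.2 (mem_insert_iff.2 (Or.inr rfl))
  have hinj : Set.InjOn (fmap r) (Sset r) := fun a ha a' ha' h => by
    rw [← finv_fmap r hr a ha, h, finv_fmap r hr a' ha']
  have hker : ∀ z, Tlin r z = 0 → ∃ a b : ZMod 2,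
      z = a • mWVec r (ye r (((r - 1 : ℕ) : ZMod (r + 1))))
        + b • mWVec r (ye r (((r : ℕ) : ZMod (r + 1)))) := by
    intro z hz
    rw [vc1_eq r hr, vc2_eq r hr]
    exact Tker r hr z hz
  have hT1 : Tlin r (mWVec r (ye r (((r - 1 : ℕ) : ZMod (r + 1))))) = 0 := by
    rw [vc1_eq r hr]; exact Tc1 r hr
  have hT2 : Tlin r (mWVec r (ye r (((r : ℕ) : ZMod (r + 1))))) = 0 := by
    rw [vc2_eq r hr]; exact Tc2 r hr
  have hp : ∀ a b : ZMod 2, a • mWVec r (ye r (((r - 1 : ℕ) : ZMod (r + 1))))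
      + b • mWVec r (ye r (((r : ℕ) : ZMod (r + 1)))) = 0 → a = 0 ∧ b = 0 := by
    intro a b h
    exact Tpair r hr a b (by rwa [vc1_eq r hr, vc2_eq r hr] at h)
  have hmem1 : ∀ a : ↥((mDel (mCon M C) D).E), fmap r a.1 ∈ N.E := by
    intro a; rw [hNE]; exact mem_univ _
  have hmem2 : ∀ b : ↥N.E, finvmap r b.1 ∈ (mDel (mCon M C) D).E := by
    intro b; rw [hgr]; exact finv_mem r hr b.1
  refine ⟨⟨fun a => ⟨fmap r a.1, hmem1 a⟩, fun b => ⟨finvmap r b.1, hmem2 b⟩,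
      fun a => Subtype.ext (finv_fmap r hr a.1 (hgr ▸ a.2)),
      fun b => Subtype.ext (fmap_finv r hr b.1)⟩, ?_⟩
  intro I
  have hI₀ : Subtype.val '' I ⊆ Sset r := by
    rw [← hgr]
    exact Subtype.coe_image_subset _ _
  have hsub2 : Subtype.val '' I ⊆ M.E \ (C ∪ D) := by
    rw [hME, ← Set.diff_diff]
    exact hI₀
  have him : Subtype.val '' (((⟨fun a => ⟨fmap r a.1, hmem1 a⟩,
      fun b => ⟨finvmap r b.1, hmem2 b⟩,
      fun a => Subtype.ext (finv_fmap r hr a.1 (hgr ▸ a.2)),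
      fun b => Subtype.ext (fmap_finv r hr b.1)⟩ :
        ↥((mDel (mCon M C) D).E) ≃ ↥(N.E)) '' I)) = fmap r '' (Subtype.val '' I) := by
    rw [← Set.image_comp, ← Set.image_comp]
    rfl
  rw [minor_indep_iff M C D _ hCind hsub2, hMI _ (subset_univ _), him]
  have hcore := core_li (mWVec r) (mWVec (r - 2)) (Tlin r) (fmap r)
      (ye r (((r - 1 : ℕ) : ZMod (r + 1)))) (ye r (((r : ℕ) : ZMod (r + 1))))
      (Sset r) (Subtype.val '' I) hI₀ hc1S hc2S hcc (Timg_all r hr hre) hinj hker hT1 hT2 hp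
  exact hcore.trans (hNI _ (subset_univ _)).symm
end

section
/- Every internally 4-connected binary matroid with exactly 7 elements is isomorphic to the Fano matroid F_7 or its dual F_7*. -/
open Set Matroid
open Module Submodule Matrix
open scoped Classical

namespace S15

variable {α : Type*} {W W' : Type*} [AddCommGroup W] [Module (ZMod 2) W]
  [AddCommGroup W'] [Module (ZMod 2) W']

def FI (v : α → W) (I : Set α) : Prop := LinearIndependent (ZMod 2) (fun x : I => v x)

lemma fi_iff {v : α → W} {I : Set α} :
    FI v I ↔ InjOn v I ∧ LinearIndependent (ZMod 2) ((↑) : (v '' I) → W) := by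
  constructor
  · intro h
    have hinj : InjOn v I := by
      intro a ha b hb hab
      have : (⟨a, ha⟩ : I) = ⟨b, hb⟩ := h.injective hab
      exact congrArg Subtype.val this
    exact ⟨hinj, (linearIndepOn_iff_image hinj).mp h⟩
  · rintro ⟨hinj, h⟩
    exact (linearIndepOn_iff_image hinj).mpr h

lemma fi_congr {v : α → W} {v' : α → W'} {I : Set α} (f : W →ₗ[ZMod 2] W')
    (hf : Function.Injective f) (hagree : ∀ x ∈ I, v' x = f (v x)) :
    FI v' I ↔ FI v I := by
  unfold FI
  rw [show (fun x : I => v' x) = ⇑f ∘ (fun x : I => v x) from funext fun x => hagree x x.2]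
  exact f.linearIndependent_iff (LinearMap.ker_eq_bot.mpr hf)

lemma exists_fi_span (v : α → W) (X : Set α) (hX : X.Finite) :
    ∃ I ⊆ X, FI v I ∧ span (ZMod 2) (v '' I) = span (ZMod 2) (v '' X) ∧
      I.ncard = finrank (ZMod 2) (span (ZMod 2) (v '' X)) := by
  obtain ⟨b, hbsub, hbspan, hbli⟩ := exists_linearIndependent (ZMod 2) (v '' X)
  have hb' : ∀ w : b, ∃ x, x ∈ X ∧ v x = w := by
    rintro ⟨w, hw⟩
    obtain ⟨x, hx, rfl⟩ := hbsub hw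
    exact ⟨x, hx, rfl⟩
  choose gx hgx1 hgx2 using hb'
  refine ⟨range gx, ?_, ?_, ?_, ?_⟩
  · rintro x ⟨w, rfl⟩; exact hgx1 w
  all_goals {
    have himg : v '' range gx = b := by
      apply Subset.antisymm
      · rintro w ⟨x, ⟨u, rfl⟩, rfl⟩; rw [hgx2]; exact u.2
      · intro w hw; exact ⟨gx ⟨w, hw⟩, mem_range_self _, hgx2 _⟩
    have hinj : InjOn v (range gx) := by
      rintro a ⟨u, rfl⟩ a' ⟨u', rfl⟩ h
      rw [hgx2, hgx2] at h
      rw [Subtype.ext h]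
    first
    | exact fi_iff.mpr ⟨hinj, by rw [himg]; exact hbli⟩
    | (rw [himg]; exact hbspan)
    | { haveI : Fintype b := ((hX.image v).subset hbsub).fintype
        rw [← ncard_image_of_injOn hinj, himg, ← hbspan,
          finrank_span_set_eq_card hbli, ncard_eq_toFinset_card'] }
  }

lemma fi_card_le {v : α → W} {I X : Set α} (hI : FI v I) (hIX : I ⊆ X) (hX : X.Finite) :
    I.ncard ≤ finrank (ZMod 2) (span (ZMod 2) (v '' X)) := by
  haveI : FiniteDimensional (ZMod 2) (span (ZMod 2) (v '' X)) :=
    FiniteDimensional.span_of_finite _ (hX.image v)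
  obtain ⟨hinj, hli⟩ := fi_iff.mp hI
  haveI : Fintype (v '' I) := ((hX.subset hIX).image v).fintype
  rw [← ncard_image_of_injOn hinj, ncard_eq_toFinset_card',
    ← finrank_span_set_eq_card hli]
  exact Submodule.finrank_mono (span_mono (image_mono hIX))

variable {M : Matroid α} {v : α → W}

lemma indep_iff_fi (hrep : IsBinRepOn M M.E v) {I : Set α} (hI : I ⊆ M.E) :
    M.Indep I ↔ FI v I := hrep.2 I hI

lemma mRk_eq (hrep : IsBinRepOn M M.E v) (hfin : M.E.Finite) {X : Set α} (hX : X ⊆ M.E) :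
    mRk M X = finrank (ZMod 2) (span (ZMod 2) (v '' X)) := by
  obtain ⟨I, hIX, hfi, -, hcard⟩ := exists_fi_span v X (hfin.subset hX)
  have hmem : finrank (ZMod 2) (span (ZMod 2) (v '' X)) ∈
      Set.ncard '' {I | I ⊆ X ∧ M.Indep I} :=
    ⟨I, ⟨hIX, (indep_iff_fi hrep (hIX.trans hX)).mpr hfi⟩, hcard⟩
  have hbd : ∀ n ∈ Set.ncard '' {I | I ⊆ X ∧ M.Indep I},
      n ≤ finrank (ZMod 2) (span (ZMod 2) (v '' X)) := by
    rintro - ⟨J, ⟨hJX, hJ⟩, rfl⟩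
    exact fi_card_le ((indep_iff_fi hrep (hJX.trans hX)).mp hJ) hJX (hfin.subset hX)
  exact le_antisymm (csSup_le ⟨_, hmem⟩ hbd) (le_csSup ⟨_, hbd⟩ hmem)

lemma base_iff (hrep : IsBinRepOn M M.E v) {B : Set α} :
    M.IsBase B ↔ B ⊆ M.E ∧ FI v B ∧
      span (ZMod 2) (v '' B) = span (ZMod 2) (v '' M.E) := by
  rw [isBase_iff_maximal_indep]
  constructor
  · intro hB
    have hBE : B ⊆ M.E := hB.1.subset_ground
    have hfi : FI v B := (indep_iff_fi hrep hBE).mp hB.1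
    refine ⟨hBE, hfi, le_antisymm (span_mono (image_mono hBE)) ?_⟩
    rw [span_le]
    rintro - ⟨x, hxE, rfl⟩
    by_contra hxs
    have hxB : x ∉ B := fun hxB => hxs (subset_span (mem_image_of_mem v hxB))
    obtain ⟨hinj, hli⟩ := fi_iff.mp hfi
    have hfi' : FI v (insert x B) := by
      refine fi_iff.mpr ⟨?_, ?_⟩
      · intro a ha b hb hab
        rcases ha with rfl | ha <;> rcases hb with rfl | hb
        · rfl
        · exact absurd (hab ▸ subset_span (mem_image_of_mem v hb)) hxs
        · exact absurd (hab ▸ subset_span (mem_image_of_mem v ha)) hxs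
        · exact hinj ha hb hab
      · rw [image_insert_eq]
        exact LinearIndepOn.insert (show LinearIndepOn (ZMod 2) id (v '' B) from hli) (by rw [image_id]; exact hxs)
    have := hB.2 ((indep_iff_fi hrep (insert_subset hxE hBE)).mpr hfi')
      (subset_insert x B)
    exact hxB (this (mem_insert x B))
  · rintro ⟨hBE, hfi, hspan⟩
    refine ⟨(indep_iff_fi hrep hBE).mpr hfi, ?_⟩
    intro I hI hBI x hxI
    by_contra hxB
    have hIE : I ⊆ M.E := hI.subset_ground
    obtain ⟨hinjI, hliI⟩ := fi_iff.mp ((indep_iff_fi hrep hIE).mp hI)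
    have hxs : v x ∈ span (ZMod 2) (v '' B) := by
      rw [hspan]; exact subset_span (mem_image_of_mem v (hIE hxI))
    have hvxB : v x ∉ v '' B := by
      rintro ⟨b, hbB, hb⟩
      exact hxB (hinjI (hBI hbB) hxI hb ▸ hbB)
    have hli' : LinearIndependent (ZMod 2) ((↑) : (insert (v x) (v '' B) : Set W) → W) :=
      LinearIndepOn.mono (show LinearIndepOn (ZMod 2) id (v '' I) from hliI) (by
        rw [← image_insert_eq]
        exact image_mono (insert_subset hxI hBI))
    have hli'' := (linearIndepOn_insert (f := id) hvxB).mp hli'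
    exact hli''.2 (by rw [image_id]; exact hxs)

lemma coindep_iff (hrep : IsBinRepOn M M.E v) (hfin : M.E.Finite) {I : Set α}
    (hI : I ⊆ M.E) :
    M✶.Indep I ↔ span (ZMod 2) (v '' (M.E \ I)) = span (ZMod 2) (v '' M.E) := by
  rw [dual_indep_iff_exists']
  constructor
  · rintro ⟨-, B, hB, hdisj⟩
    obtain ⟨hBE, hfi, hspan⟩ := (base_iff hrep).mp hB
    have hBEI : B ⊆ M.E \ I := subset_diff.mpr ⟨hBE, hdisj.symm⟩
    exact le_antisymm (span_mono (image_mono diff_subset))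
      (hspan ▸ span_mono (image_mono hBEI))
  · intro hsp
    obtain ⟨B, hBsub, hfi, hspan, -⟩ := exists_fi_span v (M.E \ I) hfin.diff
    refine ⟨hI, B, (base_iff hrep).mpr ⟨hBsub.trans diff_subset, hfi, hspan.trans hsp⟩, ?_⟩
    exact disjoint_sdiff_right.mono_right hBsub

section Dual

variable {n m : ℕ} (v : α → (Fin n → ZMod 2)) (E : Set α) (g : ↥E ≃ Fin m)

def dmat : Matrix (Fin m) (Fin n) (ZMod 2) := fun j i => v ((g.symm j : ↥E) : α) i

def dR : Submodule (ZMod 2) (Fin m → ZMod 2) := LinearMap.range (dmat v E g).mulVecLin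

def dQ := (Fin m → ZMod 2) ⧸ dR v E g

noncomputable instance : AddCommGroup (dQ v E g) := by unfold dQ; infer_instance
noncomputable instance : Module (ZMod 2) (dQ v E g) := by unfold dQ; infer_instance
noncomputable instance : Module.Finite (ZMod 2) (dQ v E g) := by unfold dQ; infer_instance

noncomputable def dw : α → dQ v E g := fun x =>
  if h : x ∈ E then (dR v E g).mkQ (Pi.single (g ⟨x, h⟩) 1) else 0

lemma dmat_mulVec (y : Fin n → ZMod 2) (j : Fin m) :
    ((dmat v E g) *ᵥ y) j = ∑ i, v ((g.symm j : ↥E) : α) i * y i := by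
  simp [Matrix.mulVec, dotProduct, dmat]

lemma row_span : Submodule.span (ZMod 2) (Set.range (dmat v E g)) =
    Submodule.span (ZMod 2) (v '' E) := by
  congr 1
  ext w
  constructor
  · rintro ⟨j, rfl⟩
    exact ⟨(g.symm j : ↥E), (g.symm j).2, rfl⟩
  · rintro ⟨x, hx, rfl⟩
    exact ⟨g ⟨x, hx⟩, by funext i; simp [dmat]⟩

lemma finrank_dR : finrank (ZMod 2) (dR v E g) =
    finrank (ZMod 2) (span (ZMod 2) (v '' E)) := by
  have h1 : finrank (ZMod 2) (dR v E g) = (dmat v E g).rank := rfl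
  rw [h1, ← Matrix.rank_transpose, Matrix.rank_eq_finrank_span_cols,
    Matrix.col_transpose, Matrix.row, row_span]

lemma finrank_dQ (hr : finrank (ZMod 2) (span (ZMod 2) (v '' E)) ≤ m) :
    finrank (ZMod 2) (dQ v E g) = m - finrank (ZMod 2) (span (ZMod 2) (v '' E)) := by
  have h := Submodule.finrank_quotient_add_finrank (dR v E g)
  rw [finrank_dR] at h
  have hm : finrank (ZMod 2) (Fin m → ZMod 2) = m := Module.finrank_fin_fun (R := ZMod 2)
  rw [hm] at h
  have : finrank (ZMod 2) (dQ v E g) = finrank (ZMod 2) ((Fin m → ZMod 2) ⧸ dR v E g) := rfl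
  omega

lemma single_sum {I : Set α} (hIE : I ⊆ E) [Fintype ↥I] (c : ↥I → ZMod 2) (j : Fin m) :
    (∑ x : ↥I, c x • (Pi.single (g ⟨x.1, hIE x.2⟩) 1 : Fin m → ZMod 2)) j
      = if h : ((g.symm j : ↥E) : α) ∈ I then c ⟨_, h⟩ else 0 := by
  have hterm : ∀ x : ↥I, (c x • (Pi.single (g ⟨x.1, hIE x.2⟩) 1 : Fin m → ZMod 2)) j
      = if j = g ⟨x.1, hIE x.2⟩ then c x else 0 := by
    intro x
    rw [Pi.smul_apply, Pi.single_apply]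
    split <;> simp
  rw [Finset.sum_apply]
  simp_rw [hterm]
  by_cases h : ((g.symm j : ↥E) : α) ∈ I
  · rw [dif_pos h]
    have hx0 : g ⟨((g.symm j : ↥E) : α), hIE h⟩ = j := by
      have : (⟨((g.symm j : ↥E) : α), (g.symm j).2⟩ : ↥E) = g.symm j := Subtype.ext rfl
      rw [show (⟨((g.symm j : ↥E) : α), hIE h⟩ : ↥E) = g.symm j from Subtype.ext rfl]
      exact g.apply_symm_apply j
    have h0 : ∀ b : ↥I, b ∈ Finset.univ → b ≠ (⟨((g.symm j : ↥E) : α), h⟩ : ↥I) →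
        (if j = g ⟨b.1, hIE b.2⟩ then c b else 0) = 0 := by
      intro b _ hb
      rw [if_neg]
      intro hj
      apply hb
      have heq : (⟨b.1, hIE b.2⟩ : ↥E) = (⟨((g.symm j : ↥E) : α), hIE h⟩ : ↥E) := by
        apply g.injective
        rw [← hj, hx0]
      have hval : (b : α) = ((g.symm j : ↥E) : α) := congrArg Subtype.val heq
      exact Subtype.ext hval
    exact (Finset.sum_eq_single _ h0
      (fun h' => absurd (Finset.mem_univ _) h')).trans (if_pos hx0.symm)
  · rw [dif_neg h]
    apply Finset.sum_eq_zero
    intro x _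
    rw [if_neg]
    intro hj
    apply h
    have : g.symm j = ⟨x.1, hIE x.2⟩ := by rw [hj, g.symm_apply_apply]
    rw [this]
    exact x.2

def lfun (y : Fin n → ZMod 2) : (Fin n → ZMod 2) →ₗ[ZMod 2] ZMod 2 :=
  ∑ i, y i • LinearMap.proj i

lemma lfun_apply (y z : Fin n → ZMod 2) : lfun y z = ∑ i, z i * y i := by
  simp [lfun, mul_comm]

lemma dR_eq (v : α → (Fin n → ZMod 2)) (E : Set α) (g : ↥E ≃ Fin m) :
    dR v E g = LinearMap.range (dmat v E g).mulVecLin := rfl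


theorem dual_rep {M : Matroid α} {v : α → (Fin n → ZMod 2)}
    (hrep : IsBinRepOn M M.E v) (hfin : M.E.Finite) (g : ↥M.E ≃ Fin m) :
    IsBinRepOn M✶ M.E (dw v M.E g) := by
  refine ⟨rfl, fun I hI => ?_⟩
  haveI : Fintype ↥I := (hfin.subset hI).fintype
  have key : ¬ FI (dw v M.E g) I ↔
      ¬ (span (ZMod 2) (v '' (M.E \ I)) = span (ZMod 2) (v '' M.E)) := by
    constructor
    · -- dependency gives non-spanning complement
      intro h hspan
      obtain ⟨c, hsum, x₀, hc0⟩ := Fintype.not_linearIndependent_iff.mp h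
      set a : Fin m → ZMod 2 :=
        ∑ x : ↥I, c x • (Pi.single (g ⟨x.1, hI x.2⟩) 1 : Fin m → ZMod 2) with ha_def
      have hmkQ : (dR v M.E g).mkQ a = 0 := by
        rw [ha_def, map_sum]
        refine Eq.trans ?_ hsum
        apply Finset.sum_congr rfl
        intro x _
        rw [_root_.map_smul]
        congr 1
        show _ = dw v M.E g x.1
        rw [dw]; symm; exact dif_pos (hI x.2)
      have ha : a ∈ dR v M.E g := by
        rwa [Submodule.mkQ_apply, Submodule.Quotient.mk_eq_zero] at hmkQ
      rw [dR_eq] at ha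
      obtain ⟨y, hy⟩ := ha
      have hval : ∀ (x : α) (hx : x ∈ M.E), a (g ⟨x, hx⟩) = lfun y (v x) := by
        intro x hx
        rw [← hy, Matrix.mulVecLin_apply, dmat_mulVec, lfun_apply]
        simp [g.symm_apply_apply]
      have hsing : ∀ (x : α) (hx : x ∈ M.E),
          a (g ⟨x, hx⟩) = if h' : x ∈ I then c ⟨x, h'⟩ else 0 := by
        intro x hx
        rw [ha_def, single_sum M.E g hI c (g ⟨x, hx⟩)]
        congr 1 <;> rw [g.symm_apply_apply]
      have hvan : v '' (M.E \ I) ⊆ (LinearMap.ker (lfun y) : Set (Fin n → ZMod 2)) := by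
        rintro - ⟨x, hx, rfl⟩
        have h1 := hval x hx.1
        have h2 := hsing x hx.1
        rw [dif_neg hx.2] at h2
        simp only [SetLike.mem_coe, LinearMap.mem_ker]
        rw [← h1, h2]
      have hUker : span (ZMod 2) (v '' M.E) ≤ LinearMap.ker (lfun y) := by
        rw [← hspan]
        exact span_le.mpr hvan
      have hx₀E : (x₀ : α) ∈ M.E := hI x₀.2
      have h0 : lfun y (v x₀) = 0 :=
        hUker (subset_span (mem_image_of_mem v hx₀E))
      have h1 := hval x₀.1 hx₀E
      have h2 := hsing x₀.1 hx₀E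
      rw [dif_pos x₀.2] at h2
      apply hc0
      have : c ⟨x₀.1, x₀.2⟩ = c x₀ := by congr
      rw [← this, ← h2, h1, h0]
    · -- non-spanning complement gives dependency
      intro hne
      have hV'U : span (ZMod 2) (v '' (M.E \ I)) ≤ span (ZMod 2) (v '' M.E) :=
        span_mono (image_mono diff_subset)
      obtain ⟨u₀, hu₀U, hu₀V⟩ := SetLike.exists_of_lt (lt_of_le_of_ne hV'U hne)
      set π := (span (ZMod 2) (v '' (M.E \ I))).mkQ with hπ_def
      have hπ : π u₀ ≠ 0 := fun h0 => hu₀V (by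
        rwa [hπ_def, Submodule.mkQ_apply, Submodule.Quotient.mk_eq_zero] at h0)
      have hψ : ∃ ψ : Module.Dual (ZMod 2) _, ψ (π u₀) ≠ 0 := by
        by_contra hc
        push_neg at hc
        exact hπ ((Module.forall_dual_apply_eq_zero_iff (ZMod 2) (π u₀)).mp hc)
      obtain ⟨ψ, hψ⟩ := hψ
      set φ : (Fin n → ZMod 2) →ₗ[ZMod 2] ZMod 2 := ψ.comp π with hφ_def
      have hφ0 : ∀ z ∈ span (ZMod 2) (v '' (M.E \ I)), φ z = 0 := by
        intro z hz
        have : π z = 0 := by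
          rw [hπ_def, Submodule.mkQ_apply, Submodule.Quotient.mk_eq_zero]
          exact hz
        rw [hφ_def, LinearMap.comp_apply, this, map_zero]
      have hφu : φ u₀ ≠ 0 := hψ
      set y : Fin n → ZMod 2 := fun i => φ (fun j' => if i = j' then 1 else 0) with hy_def
      have hkey : ∀ z, φ z = ∑ i, z i * y i := by
        intro z
        rw [LinearMap.pi_apply_eq_sum_univ φ z]
        apply Finset.sum_congr rfl
        intro i _
        rw [smul_eq_mul, hy_def]
      set c : ↥I → ZMod 2 := fun x => φ (v x.1) with hc_def
      have hsum : ∑ x : ↥I, c x • dw v M.E g x.1 = 0 := by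
        have hstep : ∑ x : ↥I, c x • dw v M.E g x.1 = (dR v M.E g).mkQ
            (∑ x : ↥I, c x • (Pi.single (g ⟨x.1, hI x.2⟩) 1 : Fin m → ZMod 2)) := by
          rw [map_sum]
          apply Finset.sum_congr rfl
          intro x _
          rw [_root_.map_smul]
          congr 1
          show dw v M.E g x.1 = _
          rw [dw]; exact dif_pos (hI x.2)
        rw [hstep, Submodule.mkQ_apply]
        refine (Submodule.Quotient.mk_eq_zero (dR v M.E g)).mpr ?_
        rw [dR_eq]
        refine ⟨y, ?_⟩
        funext j
        rw [Matrix.mulVecLin_apply, dmat_mulVec, single_sum M.E g hI c j]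
        rw [← hkey]
        by_cases h' : ((g.symm j : ↥M.E) : α) ∈ I
        · rw [dif_pos h']
        · rw [dif_neg h']
          exact hφ0 _ (subset_span (mem_image_of_mem v ⟨(g.symm j).2, h'⟩))
      have hex : ∃ x : ↥I, c x ≠ 0 := by
        by_contra hc
        push_neg at hc
        apply hφu
        have hUker : span (ZMod 2) (v '' M.E) ≤ LinearMap.ker φ := by
          apply span_le.mpr
          rintro - ⟨x, hx, rfl⟩
          simp only [SetLike.mem_coe, LinearMap.mem_ker]
          by_cases hxI : x ∈ I
          · exact hc ⟨x, hxI⟩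
          · exact hφ0 _ (subset_span (mem_image_of_mem v ⟨hx, hxI⟩))
        exact hUker hu₀U
      exact Fintype.not_linearIndependent_iff.mpr ⟨c, hsum, hex⟩
  have claim2 : FI (dw v M.E g) I ↔
      span (ZMod 2) (v '' (M.E \ I)) = span (ZMod 2) (v '' M.E) := not_iff_not.mp key
  exact (coindep_iff hrep hfin hI).trans claim2.symm

end Dual


lemma count_le {Q : Type*} [AddCommGroup Q] [Module (ZMod 2) Q]
    [Module.Finite (ZMod 2) Q] {X : Type*} [Finite X] (f : X → Q)
    (hf : Function.Injective f) (h0 : ∀ x, f x ≠ 0) :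
    Nat.card X ≤ 2 ^ finrank (ZMod 2) Q - 1 := by
  haveI : Finite Q := Module.finite_of_finite (ZMod 2)
  haveI : Fintype Q := Fintype.ofFinite Q
  haveI : Fintype X := Fintype.ofFinite X
  have hcard : Fintype.card Q = 2 ^ finrank (ZMod 2) Q := by
    have := card_eq_pow_finrank (K := ZMod 2) (V := Q)
    simpa [ZMod.card] using this
  have hinj : Function.Injective (fun x => (⟨f x, h0 x⟩ : {q : Q // q ≠ 0})) := by
    intro a b hab
    exact hf (congrArg Subtype.val hab)
  have := Fintype.card_le_of_injective _ hinj
  have hsub : Fintype.card {q : Q // q ≠ 0} = Fintype.card Q - 1 := by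
    rw [Fintype.card_subtype_compl, Fintype.card_subtype_eq]
  rw [Nat.card_eq_fintype_card]
  omega

variable {β : Type*} {M : Matroid α} {N : Matroid β} 

lemma dual_imp (e : ↥M.E ≃ ↥N.E)
    (he : ∀ I : Set ↥M.E, M.Indep (Subtype.val '' I) ↔ N.Indep (Subtype.val '' (e '' I)))
    (hesym : ∀ J : Set ↥N.E, N.Indep (Subtype.val '' J) ↔
      M.Indep (Subtype.val '' (e.symm '' J)))
    (I : Set ↥M.E) (h : M✶.Indep (Subtype.val '' I)) :
    N✶.Indep (Subtype.val '' (e '' I)) := by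
  rw [dual_indep_iff_exists'] at h ⊢
  obtain ⟨-, B, hB, hdisj⟩ := h
  have hBE : B ⊆ M.E := hB.subset_ground
  have hBeq : Subtype.val '' (Subtype.val ⁻¹' B : Set ↥M.E) = B := by
    rw [Subtype.image_preimage_coe, inter_eq_self_of_subset_right hBE]
  refine ⟨Subtype.coe_image_subset _ _, Subtype.val '' (e '' (Subtype.val ⁻¹' B)), ?_, ?_⟩
  · rw [isBase_iff_maximal_indep]
    constructor
    · rw [← he, hBeq]
      exact hB.indep
    · intro J hJ hBJ
      have hJE : J ⊆ N.E := hJ.subset_ground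
      set J₀ : Set ↥N.E := Subtype.val ⁻¹' J with hJ₀
      have hJeq : Subtype.val '' J₀ = J := by
        rw [hJ₀, Subtype.image_preimage_coe, inter_eq_self_of_subset_right hJE]
      have hMind : M.Indep (Subtype.val '' (e.symm '' J₀)) := by
        rw [← hesym, hJeq]; exact hJ
      have hBsub : B ⊆ Subtype.val '' (e.symm '' J₀) := by
        rw [← hBeq]
        apply image_mono
        intro x hx
        have : (e x : β) ∈ J := hBJ (mem_image_of_mem _ (mem_image_of_mem _ hx))
        refine ⟨e x, this, by simp⟩
      have hmax := (isBase_iff_maximal_indep.mp hB).2 hMind hBsub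
      -- now J ⊆ B'
      rw [← hJeq]
      intro j hj
      obtain ⟨j₀, hj₀, rfl⟩ := hj
      have : (j₀ : β) ∈ Subtype.val '' J₀ := mem_image_of_mem _ hj₀
      have h2 : ((e.symm j₀ : ↥M.E) : α) ∈ B :=
        hmax (mem_image_of_mem _ (mem_image_of_mem _ hj₀))
      have h3 : e.symm j₀ ∈ (Subtype.val ⁻¹' B : Set ↥M.E) := h2
      refine ⟨j₀, ⟨e.symm j₀, h3, by simp⟩, rfl⟩
  · rw [disjoint_left]
    rintro - ⟨p, hp, rfl⟩ ⟨q, hq, hqp⟩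
    obtain ⟨x, hxI, rfl⟩ := hp
    obtain ⟨b, hb, rfl⟩ := hq
    have : e b = e x := Subtype.ext hqp
    have hbx : b = x := e.injective this
    subst hbx
    exact (disjoint_left.mp hdisj) (mem_image_of_mem _ hxI) hb

lemma matroidIso_dual (h : MatroidIso M N) : MatroidIso M✶ N✶ := by
  obtain ⟨e, he⟩ := h
  have hesym : ∀ J : Set ↥N.E, N.Indep (Subtype.val '' J) ↔
      M.Indep (Subtype.val '' (e.symm '' J)) := by
    intro J
    rw [he (e.symm '' J), Equiv.image_symm_image]
  refine ⟨e, fun I => ⟨dual_imp e he hesym I, fun h => ?_⟩⟩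
  have hesymsym : ∀ I : Set ↥M.E, M.Indep (Subtype.val '' I) ↔
      N.Indep (Subtype.val '' (e.symm.symm '' I)) := by
    intro I; rw [Equiv.symm_symm]; exact he I
  have := dual_imp e.symm hesym hesymsym (e '' I) h
  have key : ∀ J : Set ↥M.E, M✶.Indep (Subtype.val '' (e.symm '' (e '' J))) →
      M✶.Indep (Subtype.val '' J) := fun J hJ => by rwa [Equiv.symm_image_image] at hJ
  exact key I this

lemma lemA [Module.Finite (ZMod 2) W] {M : Matroid α} {v : α → W}
    (hrep : IsBinRepOn M M.E v) (h7 : M.E.ncard = 7)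
    (hdim : finrank (ZMod 2) W = 3) (hinj : InjOn v M.E) (h0 : ∀ x ∈ M.E, v x ≠ 0)
    {F : Matroid (PGpt 3)} (hF : IsBinRepOn F univ Subtype.val) :
    MatroidIso M F := by
  have L : W ≃ₗ[ZMod 2] (Fin 3 → ZMod 2) :=
    LinearEquiv.ofFinrankEq _ _ (by
      rw [hdim]; exact (Module.finrank_fin_fun (R := ZMod 2)).symm)
  set v' : α → (Fin 3 → ZMod 2) := fun x => L (v x) with hv'
  have hrep' : IsBinRepOn M M.E v' :=
    ⟨hrep.1, fun I hI => (hrep.2 I hI).trans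
      (fi_congr (L : W →ₗ[ZMod 2] (Fin 3 → ZMod 2)) L.injective (fun _ _ => rfl)).symm⟩
  have hfin : M.E.Finite := Set.finite_of_ncard_ne_zero (by rw [h7]; norm_num)
  haveI := hfin.fintype
  have hcard : Fintype.card ↥M.E = 7 := by
    rw [← Set.toFinset_card, ← ncard_eq_toFinset_card']; exact h7
  have h0' : ∀ x : ↥M.E, v' x.1 ≠ 0 := by
    intro x hz
    exact h0 x.1 x.2 (by
      have : L (v x.1) = L 0 := by rw [map_zero]; exact hz
      exact L.injective this)
  set eh : ↥M.E → PGpt 3 := fun x => ⟨v' x.1, h0' x⟩ with heh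
  have hinj' : Function.Injective eh := by
    intro a b hab
    have h1 : v' a.1 = v' b.1 := congrArg Subtype.val hab
    have h2 : v a.1 = v b.1 := L.injective h1
    exact Subtype.ext (hinj a.2 b.2 h2)
  have hbij : Function.Bijective eh :=
    (Fintype.bijective_iff_injective_and_card eh).mpr ⟨hinj', by rw [hcard]; decide⟩
  refine ⟨(Equiv.ofBijective eh hbij).trans
    ((Equiv.Set.univ (PGpt 3)).symm.trans (Equiv.setCongr hF.1.symm)), fun I => ?_⟩
  set e := (Equiv.ofBijective eh hbij).trans
    ((Equiv.Set.univ (PGpt 3)).symm.trans (Equiv.setCongr hF.1.symm)) with he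
  have hval : ∀ x : ↥M.E, ((e x : ↥F.E) : PGpt 3) = eh x := fun x => rfl
  have himg : Subtype.val '' (e '' I) = eh '' I := by
    rw [← image_comp]
    exact image_congr (fun x _ => hval x)
  have hset : Subtype.val '' (Subtype.val '' (e '' I)) = v' '' (Subtype.val '' I) := by
    rw [himg, image_image, image_image]
  have lhs : M.Indep (Subtype.val '' I) ↔ FI v' (Subtype.val '' I) :=
    hrep'.2 _ (Subtype.coe_image_subset _ _)
  have rhs : F.Indep (Subtype.val '' (e '' I)) ↔
      FI (Subtype.val : PGpt 3 → (Fin 3 → ZMod 2)) (Subtype.val '' (e '' I)) :=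
    hF.2 _ (subset_univ _)
  rw [lhs, rhs, fi_iff, fi_iff, hset]
  constructor
  · rintro ⟨-, hli⟩
    exact ⟨Subtype.val_injective.injOn, hli⟩
  · rintro ⟨-, hli⟩
    refine ⟨fun a ha b hb hab => ?_, hli⟩
    obtain ⟨a', ha', rfl⟩ := ha
    obtain ⟨b', hb', rfl⟩ := hb
    exact hinj a'.2 b'.2 (L.injective hab)

end S15

/-- Every internally 4-connected binary matroid with exactly 7 elements is isomorphic to
the Fano matroid `F_7` or its dual. -/
theorem statement15 {α : Type*} (M : Matroid α) (hb : mBinary M) (h7 : M.E.ncard = 7)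
    (h4 : mInternally4 M)
    (F : Matroid (PGpt 3)) (hF : IsBinRepOn F univ Subtype.val) :
    MatroidIso M F ∨ MatroidIso M F✶ := by
  classical
  obtain ⟨n, v, hrep⟩ := hb
  have hfin : M.E.Finite := Set.finite_of_ncard_ne_zero (by rw [h7]; norm_num)
  haveI := hfin.fintype
  have hcard : Fintype.card ↥M.E = 7 := by
    rw [← Set.toFinset_card, ← Set.ncard_eq_toFinset_card']; exact h7
  have g : ↥M.E ≃ Fin 7 := Fintype.equivFinOfCardEq hcard
  have hrk : ∀ X, X ⊆ M.E → mRk M X = finrank (ZMod 2) (span (ZMod 2) (v '' X)) :=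
    fun X hX => S15.mRk_eq hrep hfin hX
  have no1 : ∀ X, X ⊆ M.E → 1 ≤ X.ncard → 1 ≤ (M.E \ X).ncard →
      finrank (ZMod 2) (span (ZMod 2) (v '' X)) +
        finrank (ZMod 2) (span (ZMod 2) (v '' (M.E \ X))) + 1 ≤
        finrank (ZMod 2) (span (ZMod 2) (v '' M.E)) + 1 → False := by
    intro X hX h1 h2 h3
    exact h4.1.1 X (M.E \ X) ⟨disjoint_sdiff_right, union_diff_cancel hX, h1, h2, by
      rw [hrk X hX, hrk _ diff_subset, hrk M.E Subset.rfl]; exact h3⟩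
  have no2 : ∀ X, X ⊆ M.E → 2 ≤ X.ncard → 2 ≤ (M.E \ X).ncard →
      finrank (ZMod 2) (span (ZMod 2) (v '' X)) +
        finrank (ZMod 2) (span (ZMod 2) (v '' (M.E \ X))) + 1 ≤
        finrank (ZMod 2) (span (ZMod 2) (v '' M.E)) + 2 → False := by
    intro X hX h1 h2 h3
    exact h4.1.2 X (M.E \ X) ⟨disjoint_sdiff_right, union_diff_cancel hX, h1, h2, by
      rw [hrk X hX, hrk _ diff_subset, hrk M.E Subset.rfl]; exact h3⟩
  have hmono : ∀ X, X ⊆ M.E → finrank (ZMod 2) (span (ZMod 2) (v '' X)) ≤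
      finrank (ZMod 2) (span (ZMod 2) (v '' M.E)) := fun X hX =>
    Submodule.finrank_mono (span_mono (image_mono hX))
  have hdcard : ∀ X : Set α, X.Finite →
      finrank (ZMod 2) (span (ZMod 2) (v '' X)) ≤ X.ncard := by
    intro X hXf
    haveI : Fintype ↥(v '' X) := (hXf.image v).fintype
    calc finrank (ZMod 2) (span (ZMod 2) (v '' X)) ≤ (v '' X).toFinset.card :=
        finrank_span_le_card _
    _ = (v '' X).ncard := (Set.ncard_eq_toFinset_card' _).symm
    _ ≤ X.ncard := Set.ncard_image_le hXf
  have f0 : ∀ x ∈ M.E, v x ≠ 0 := by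
    intro x hx hvx
    refine no1 {x} (singleton_subset_iff.mpr hx) (by simp) ?_ ?_
    · rw [Set.ncard_diff_singleton_of_mem hx, h7]; norm_num
    · have hz : finrank (ZMod 2) (span (ZMod 2) (v '' {x})) = 0 := by
        rw [image_singleton, hvx, Submodule.span_zero_singleton, finrank_bot]
      rw [hz]
      have := hmono _ (diff_subset (s := M.E) (t := {x}))
      omega
  have f2 : InjOn v M.E := by
    intro x hx y hy hxy
    by_contra hne
    have himg : v '' {x, y} = v '' {y} := by
      simp [Set.image_pair, hxy]
    refine no2 {x, y} (insert_subset hx (singleton_subset_iff.mpr hy))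
      (by rw [Set.ncard_pair hne]) ?_ ?_
    · rw [Set.ncard_diff (insert_subset hx (singleton_subset_iff.mpr hy))
        ((finite_singleton y).insert x), Set.ncard_pair hne, h7]
      norm_num
    · have h1 : finrank (ZMod 2) (span (ZMod 2) (v '' {x, y})) ≤ 1 := by
        rw [himg]
        have := hdcard {y} (finite_singleton y)
        rwa [Set.ncard_singleton] at this
      have := hmono _ (diff_subset (s := M.E) (t := {x, y}))
      omega
  have f3 : ∀ x ∈ M.E, finrank (ZMod 2) (span (ZMod 2) (v '' (M.E \ {x}))) =
      finrank (ZMod 2) (span (ZMod 2) (v '' M.E)) := by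
    intro x hx
    refine le_antisymm (hmono _ diff_subset) ?_
    by_contra hlt
    push_neg at hlt
    refine no1 {x} (singleton_subset_iff.mpr hx) (by simp) ?_ ?_
    · rw [Set.ncard_diff_singleton_of_mem hx, h7]; norm_num
    · have h1 : finrank (ZMod 2) (span (ZMod 2) (v '' {x})) ≤ 1 := by
        have := hdcard {x} (finite_singleton x)
        rwa [Set.ncard_singleton] at this
      omega
  have f4 : ∀ x ∈ M.E, ∀ y ∈ M.E, x ≠ y →
      finrank (ZMod 2) (span (ZMod 2) (v '' (M.E \ {x, y}))) =
      finrank (ZMod 2) (span (ZMod 2) (v '' M.E)) := by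
    intro x hx y hy hne
    refine le_antisymm (hmono _ diff_subset) ?_
    by_contra hlt
    push_neg at hlt
    refine no2 {x, y} (insert_subset hx (singleton_subset_iff.mpr hy))
      (by rw [Set.ncard_pair hne]) ?_ ?_
    · rw [Set.ncard_diff (insert_subset hx (singleton_subset_iff.mpr hy))
        ((finite_singleton y).insert x), Set.ncard_pair hne, h7]
      norm_num
    · have h1 : finrank (ZMod 2) (span (ZMod 2) (v '' {x, y})) ≤ 2 := by
        have := hdcard {x, y} (by exact (finite_singleton y).insert x)
        rwa [Set.ncard_pair hne] at this
      omega
  -- counting : rank at least 3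
  have hr3 : 3 ≤ finrank (ZMod 2) (span (ZMod 2) (v '' M.E)) := by
    have hcnt := S15.count_le (Q := ↥(span (ZMod 2) (v '' M.E))) (X := ↥M.E)
      (fun x => ⟨v x.1, subset_span (mem_image_of_mem v x.2)⟩)
      (fun a b hab => Subtype.ext (f2 a.2 b.2 (congrArg Subtype.val hab)))
      (fun x hz => f0 x.1 x.2 (congrArg Subtype.val hz))
    rw [Nat.card_coe_set_eq, h7] at hcnt
    by_contra hcon
    push_neg at hcon
    have : (2:ℕ) ^ finrank (ZMod 2) (span (ZMod 2) (v '' M.E)) ≤ 2 ^ 2 :=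
      Nat.pow_le_pow_right (by norm_num) (by omega)
    omega
  -- the dual representation
  have hrepd := S15.dual_rep hrep hfin g
  have hrE : finrank (ZMod 2) (span (ZMod 2) (v '' M.E)) ≤ 7 := by
    have := hdcard M.E hfin
    omega
  have hQdim : finrank (ZMod 2) (S15.dQ v M.E g) =
      7 - finrank (ZMod 2) (span (ZMod 2) (v '' M.E)) := S15.finrank_dQ v M.E g hrE
  have hpair : ∀ x ∈ M.E, ∀ y ∈ M.E, x ≠ y → S15.FI (S15.dw v M.E g) {x, y} := by
    intro x hx y hy hne
    have hsub : ({x, y} : Set α) ⊆ M.E := insert_subset hx (singleton_subset_iff.mpr hy)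
    have hspan : span (ZMod 2) (v '' (M.E \ {x, y})) = span (ZMod 2) (v '' M.E) :=
      Submodule.eq_of_le_of_finrank_eq (span_mono (image_mono diff_subset))
        (f4 x hx y hy hne)
    have hco : M✶.Indep {x, y} := (S15.coindep_iff hrep hfin hsub).mpr hspan
    exact (hrepd.2 {x, y} hsub).mp hco
  have hwinj : InjOn (S15.dw v M.E g) M.E := by
    intro x hx y hy hxy
    by_contra hne
    have hfi := hpair x hx y hy hne
    have : (⟨x, mem_insert x {y}⟩ : ↥({x, y} : Set α)) =
        ⟨y, mem_insert_of_mem x rfl⟩ := hfi.injective hxy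
    exact hne (congrArg Subtype.val this)
  have hw0 : ∀ x ∈ M.E, S15.dw v M.E g x ≠ 0 := by
    intro x hx
    have h6 : (M.E \ {x}).ncard = 6 := by
      rw [Set.ncard_diff_singleton_of_mem hx, h7]
    have hne6 : (M.E \ {x}).Nonempty := by
      rw [← Set.ncard_pos hfin.diff]
      omega
    obtain ⟨y, hy⟩ := hne6
    have hfi := hpair x hx y hy.1 (fun h => hy.2 (h ▸ rfl))
    exact hfi.ne_zero ⟨x, mem_insert x {y}⟩
  -- counting : rank at most 4
  have hr4 : finrank (ZMod 2) (span (ZMod 2) (v '' M.E)) ≤ 4 := by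
    have hcnt := S15.count_le (Q := S15.dQ v M.E g) (X := ↥M.E)
      (fun x => S15.dw v M.E g x.1)
      (fun a b hab => Subtype.ext (hwinj a.2 b.2 hab))
      (fun x => hw0 x.1 x.2)
    rw [Nat.card_coe_set_eq, h7, hQdim] at hcnt
    by_contra hcon
    push_neg at hcon
    have : (2:ℕ) ^ (7 - finrank (ZMod 2) (span (ZMod 2) (v '' M.E))) ≤ 2 ^ 2 :=
      Nat.pow_le_pow_right (by norm_num) (by omega)
    omega
  -- case split
  rcases Nat.lt_or_ge (finrank (ZMod 2) (span (ZMod 2) (v '' M.E))) 4 with hc | hc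
  · -- rank 3 : M ≅ F
    left
    have hr : finrank (ZMod 2) (span (ZMod 2) (v '' M.E)) = 3 := by omega
    set U := span (ZMod 2) (v '' M.E) with hU
    set v₁ : α → ↥U := fun x =>
      if h : x ∈ M.E then ⟨v x, subset_span (mem_image_of_mem v h)⟩ else 0 with hv₁
    have hagree : ∀ (I : Set α), I ⊆ M.E → ∀ x ∈ I, v x = U.subtype (v₁ x) := by
      intro I hI x hxI
      rw [hv₁]
      simp only [dif_pos (hI hxI)]
      rfl
    have hrep1 : IsBinRepOn M M.E v₁ :=
      ⟨hrep.1, fun I hI => (hrep.2 I hI).trans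
        (S15.fi_congr U.subtype (Submodule.injective_subtype U) (hagree I hI))⟩
    exact S15.lemA hrep1 h7 hr
      (fun x hx y hy hxy => by
        have : v x = v y := by
          rw [hagree M.E Subset.rfl x hx, hagree M.E Subset.rfl y hy, hxy]
        exact f2 hx hy this)
      (fun x hx hz => by
        apply f0 x hx
        rw [hagree M.E Subset.rfl x hx, hz, map_zero]) hF
  · -- rank 4 : M ≅ F✶
    right
    have hr : finrank (ZMod 2) (span (ZMod 2) (v '' M.E)) = 4 := by omega
    have hQ3 : finrank (ZMod 2) (S15.dQ v M.E g) = 3 := by rw [hQdim, hr]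
    have hiso : MatroidIso M✶ F :=
      S15.lemA (M := M✶) hrepd h7 hQ3 hwinj hw0 hF
    have := S15.matroidIso_dual hiso
    rwa [dual_dual] at this
end
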